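/- arXiv:1407.7017 — 4 statements merged into one kernel-verified Lean document; each statement's English description precedes it below -/
import Mathlib

section
/- For every chordal graph G, the positive zero forcing number satisfies Z_+(G) = |V(G)| − cc(G), where cc(G) is the clique cover number of G. -/
/-! Basic definitions for zero forcing and positive (semidefinite) zero forcing. -/

variable {V : Type*}

/-- The standard zero forcing colour change rule: a black vertex `u` (i.e. `u ∈ S`)
forces its unique white neighbour `w`. -/
def ZFForce (G : SimpleGraph V) (S : Set V) (u w : V) : Prop :=
  u ∈ S ∧ w ∉ S ∧ G.Adj u w ∧ ∀ x, G.Adj u x → x ∉ S → x = w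

/-- `x` and `y` are joined by a path of `G` all of whose vertices avoid `S`,
i.e. they lie in the same connected component of `G − S`. -/
def ConnOutside (G : SimpleGraph V) (S : Set V) : V → V → Prop :=
  Relation.ReflTransGen fun x y => x ∉ S ∧ y ∉ S ∧ G.Adj x y

/-- The positive (semidefinite) colour change rule: a black vertex `u` forces a white
neighbour `w` provided `w` is the only white neighbour of `u` lying in the connected
component of `G − S` containing `w`. -/
def PSDForce (G : SimpleGraph V) (S : Set V) (u w : V) : Prop :=
  u ∈ S ∧ w ∉ S ∧ G.Adj u w ∧
    ∀ x, G.Adj u x → x ∉ S → ConnOutside G S x w → x = w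

/-- A list of forces, applied in order starting with black set `S`, is a valid sequence
of applications of the standard colour change rule. -/
def ZFValid (G : SimpleGraph V) : Set V → List (V × V) → Prop
  | _, [] => True
  | S, p :: L => ZFForce G S p.1 p.2 ∧ ZFValid G (insert p.2 S) L

/-- A list of forces, applied in order starting with black set `S`, is a valid sequence
of applications of the positive colour change rule. -/
def PSDValid (G : SimpleGraph V) : Set V → List (V × V) → Prop
  | _, [] => True
  | S, p :: L => PSDForce G S p.1 p.2 ∧ PSDValid G (insert p.2 S) L

/-- The black set resulting from performing the given list of forces. -/
def applyForces (S : Set V) (L : List (V × V)) : Set V :=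
  L.foldl (fun T p => insert p.2 T) S

/-- `B` is a zero forcing set: repeatedly applying the colour change rule starting from
`B` colours every vertex black. -/
def IsZeroForcingSet (G : SimpleGraph V) (B : Set V) : Prop :=
  ∃ L : List (V × V), ZFValid G B L ∧ applyForces B L = Set.univ

/-- `B` is a positive zero forcing set. -/
def IsPSDForcingSet (G : SimpleGraph V) (B : Set V) : Prop :=
  ∃ L : List (V × V), PSDValid G B L ∧ applyForces B L = Set.univ

/-- The zero forcing number `Z(G)`. -/
noncomputable def zfNum (G : SimpleGraph V) : ℕ :=
  sInf {n | ∃ B : Set V, B.ncard = n ∧ IsZeroForcingSet G B}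

/-- The positive (semidefinite) zero forcing number `Z₊(G)`. -/
noncomputable def psdNum (G : SimpleGraph V) : ℕ :=
  sInf {n | ∃ B : Set V, B.ncard = n ∧ IsPSDForcingSet G B}

/-- A clique cover of `G`: a finite family of cliques covering every edge of `G`. -/
def IsCliqueCover (G : SimpleGraph V) (𝒞 : Finset (Set V)) : Prop :=
  (∀ C ∈ 𝒞, G.IsClique C) ∧ ∀ u v, G.Adj u v → ∃ C ∈ 𝒞, u ∈ C ∧ v ∈ C

/-- The clique cover number `cc(G)`. -/
noncomputable def ccNum (G : SimpleGraph V) : ℕ :=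
  sInf {n | ∃ 𝒞 : Finset (Set V), 𝒞.card = n ∧ IsCliqueCover G 𝒞}

/-- A tree cover of `G`: a family of vertex-disjoint induced subtrees whose vertex sets
partition `V(G)`. -/
def IsTreeCover (G : SimpleGraph V) (𝒯 : Finset (Set V)) : Prop :=
  (∀ S ∈ 𝒯, (G.induce S).IsTree) ∧
    (∀ S ∈ 𝒯, ∀ T ∈ 𝒯, S ≠ T → Disjoint S T) ∧
    ∀ v : V, ∃ S ∈ 𝒯, v ∈ S

/-- The tree cover number `T(G)`. -/
noncomputable def tcNum (G : SimpleGraph V) : ℕ :=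
  sInf {n | ∃ 𝒯 : Finset (Set V), 𝒯.card = n ∧ IsTreeCover G 𝒯}

/-- A graph is chordal if it contains no induced cycle on four or more vertices. -/
def IsChordal (G : SimpleGraph V) : Prop :=
  ∀ n, 4 ≤ n → IsEmpty (SimpleGraph.cycleGraph n ↪g G)

/-- `C` is a maximal clique of `G`. -/
def IsMaxClique (G : SimpleGraph V) (C : Set V) : Prop :=
  G.IsClique C ∧ ∀ D : Set V, G.IsClique D → C ⊆ D → C = D

/-- A chordal graph is non-trivial if it has at least two distinct maximal cliques. -/
def NonTrivialChordal (G : SimpleGraph V) : Prop :=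
  IsChordal G ∧ ∃ C₁ C₂ : Set V, IsMaxClique G C₁ ∧ IsMaxClique G C₂ ∧ C₁ ≠ C₂

/-- A vertex is simplicial if its neighbourhood induces a clique. -/
def IsSimplicial (G : SimpleGraph V) (v : V) : Prop :=
  G.IsClique (G.neighborSet v)
section Basics

variable {G : SimpleGraph V} {S : Set V}

lemma ConnOutside.mono {S T : Set V} (hST : S ⊆ T) {x y : V}
    (h : ConnOutside G T x y) : ConnOutside G S x y := by
  induction h with
  | refl => exact Relation.ReflTransGen.refl
  | tail _ hstep ih =>
      exact ih.tail ⟨fun hx => hstep.1 (hST hx), fun hy => hstep.2.1 (hST hy), hstep.2.2⟩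

lemma ConnOutside.symm {x y : V} (h : ConnOutside G S x y) : ConnOutside G S y x := by
  induction h with
  | refl => exact Relation.ReflTransGen.refl
  | tail _ hstep ih =>
      exact Relation.ReflTransGen.head ⟨hstep.2.1, hstep.1, hstep.2.2.symm⟩ ih

lemma ConnOutside.not_mem {x y : V} (h : ConnOutside G S x y) (hx : x ∉ S) : y ∉ S := by
  induction h with
  | refl => exact hx
  | tail _ hstep _ => exact hstep.2.1

lemma applyForces_cons (S : Set V) (p : V × V) (L : List (V × V)) :
    applyForces S (p :: L) = applyForces (insert p.2 S) L := rfl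

lemma applyForces_subset (S : Set V) (L : List (V × V)) : S ⊆ applyForces S L := by
  induction L generalizing S with
  | nil => exact subset_rfl
  | cons p L ih =>
      exact fun x hx => ih (insert p.2 S) (Set.mem_insert_iff.2 (Or.inr hx))

lemma applyForces_subset_union (S : Set V) (L : List (V × V)) :
    applyForces S L ⊆ S ∪ {w | ∃ p ∈ L, p.2 = w} := by
  induction L generalizing S with
  | nil => simp [applyForces]
  | cons p L ih =>
      rw [applyForces_cons]
      refine (ih _).trans ?_
      rintro x (hx | hx)
      · rcases Set.mem_insert_iff.1 hx with h | h
        · exact Or.inr ⟨p, by simp, h.symm⟩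
        · exact Or.inl h
      · obtain ⟨q, hq, hq2⟩ := hx
        exact Or.inr ⟨q, by simp [hq], hq2⟩

/-- The `k`-th force of a valid list is a valid force from the intermediate set. -/
lemma PSDValid.force_take {L : List (V × V)} (h : PSDValid G S L) (k : ℕ) (hk : k < L.length) :
    PSDForce G (applyForces S (L.take k)) (L.get ⟨k, hk⟩).1 (L.get ⟨k, hk⟩).2 := by
  induction L generalizing S k with
  | nil => simp at hk
  | cons p L ih =>
      cases k with
      | zero => exact h.1
      | succ k =>
          have := ih (S := insert p.2 S) h.2 k (by simpa using hk)
          simpa [applyForces_cons] using this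

lemma applyForces_take_mono (S : Set V) (L : List (V × V)) {k l : ℕ} (hkl : k ≤ l) :
    applyForces S (L.take k) ⊆ applyForces S (L.take l) := by
  induction L generalizing S k l with
  | nil => simp
  | cons p L ih =>
      cases k with
      | zero =>
          simpa [applyForces] using
            (applyForces_subset S (List.take l (p :: L))).trans subset_rfl
      | succ k =>
          cases l with
          | zero => omega
          | succ l =>
              simpa [applyForces_cons] using ih (insert p.2 S) (Nat.succ_le_succ_iff.1 hkl)

lemma mem_applyForces_take_succ (S : Set V) (L : List (V × V)) (k : ℕ) (hk : k < L.length) :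
    (L.get ⟨k, hk⟩).2 ∈ applyForces S (L.take (k + 1)) := by
  induction L generalizing S k with
  | nil => simp at hk
  | cons p L ih =>
      cases k with
      | zero =>
          simp only [List.take, applyForces_cons]
          exact applyForces_subset _ _ (Set.mem_insert _ _)
      | succ k =>
          simpa [applyForces_cons] using ih (insert p.2 S) k (by simpa using hk)

end Basics

section LowerBound

variable [Fintype V]

/-- Key general lower bound: for any PSD forcing set and any clique cover,
`|V| ≤ |B| + |𝒞|`. -/
lemma card_le_forcing_add_cover {G : SimpleGraph V} {B : Set V} {𝒞 : Finset (Set V)}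
    (hB : IsPSDForcingSet G B) (h𝒞 : IsCliqueCover G 𝒞) :
    Fintype.card V ≤ B.ncard + 𝒞.card := by
  classical
  obtain ⟨L, hval, happ⟩ := hB
  have hcl : ∀ k : Fin L.length, ∃ C ∈ 𝒞, (L.get k).1 ∈ C ∧ (L.get k).2 ∈ C := by
    intro k
    exact h𝒞.2 _ _ (hval.force_take k.1 k.2).2.2.1
  choose cl hcl𝒞 hcl1 hcl2 using hcl
  have key : ∀ k l : Fin L.length, (k : ℕ) < (l : ℕ) → cl k ≠ cl l := by
    intro k l hlt hkl
    set Sk := applyForces B (L.take k) with hSk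
    have hforce := hval.force_take k.1 k.2
    have hforcel := hval.force_take l.1 l.2
    have hwl_notk1 : (L.get l).2 ∉ applyForces B (L.take (k + 1)) := by
      intro hmem
      exact hforcel.2.1 (applyForces_take_mono B L (by omega : (k:ℕ)+1 ≤ (l:ℕ)) hmem)
    have hwl_not : (L.get l).2 ∉ Sk := fun hmem =>
      hwl_notk1 (applyForces_take_mono B L (Nat.le_succ _) hmem)
    have hne_w : (L.get l).2 ≠ (L.get k).2 := by
      intro h
      exact hwl_notk1 (h ▸ mem_applyForces_take_succ B L k k.2)
    have huk_ne : (L.get k).1 ≠ (L.get l).2 := by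
      intro h
      exact hwl_not (h ▸ hforce.1)
    -- u_k adjacent w_l, w_k adjacent w_l via the common clique
    have hC := hcl𝒞 k
    have hadj_u : G.Adj (L.get k).1 (L.get l).2 :=
      (h𝒞.1 _ hC) (hcl1 k) (hkl ▸ hcl2 l) huk_ne
    have hadj_w : G.Adj (L.get l).2 (L.get k).2 :=
      (h𝒞.1 _ hC) (hkl ▸ hcl2 l) (hcl2 k) hne_w
    have hconn : ConnOutside G Sk (L.get l).2 (L.get k).2 :=
      Relation.ReflTransGen.single ⟨hwl_not, hforce.2.1, hadj_w⟩
    exact hne_w (hforce.2.2.2 _ hadj_u hwl_not hconn)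
  have hinj : Function.Injective cl := by
    intro k l hkl
    by_contra hne
    rcases Nat.lt_or_ge (k : ℕ) (l : ℕ) with h | h
    · exact key k l h hkl
    · have : (l : ℕ) < (k : ℕ) := lt_of_le_of_ne h (by
        intro hh; exact hne (Fin.ext hh.symm))
      exact key l k this hkl.symm
  -- count
  have hlen : L.length ≤ 𝒞.card := by
    have : Fintype.card (Fin L.length) ≤ Fintype.card {C // C ∈ 𝒞} := by
      refine Fintype.card_le_of_injective (fun k => ⟨cl k, hcl𝒞 k⟩) ?_
      intro k l h
      exact hinj (Subtype.ext_iff.1 h)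
    simpa [Fintype.card_coe] using this
  have hsub : (Set.univ : Set V) ⊆ B ∪ {w | ∃ p ∈ L, p.2 = w} := by
    rw [← happ]
    exact applyForces_subset_union B L
  have hcount : Fintype.card V ≤ B.ncard + L.length := by
    have h1 : (Set.univ : Set V).ncard ≤ (B ∪ {w | ∃ p ∈ L, p.2 = w}).ncard :=
      Set.ncard_le_ncard hsub (Set.toFinite _)
    have h2 : (B ∪ {w | ∃ p ∈ L, p.2 = w}).ncard ≤ B.ncard + ({w | ∃ p ∈ L, p.2 = w} : Set V).ncard :=
      Set.ncard_union_le _ _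
    have h3 : ({w | ∃ p ∈ L, p.2 = w} : Set V).ncard ≤ L.length := by
      have : {w | ∃ p ∈ L, p.2 = w} ⊆ (fun k : Fin L.length => (L.get k).2) '' Set.univ := by
        rintro w ⟨p, hp, rfl⟩
        obtain ⟨k, hk⟩ := List.get_of_mem hp
        exact ⟨k, trivial, congrArg Prod.snd hk⟩
      calc ({w | ∃ p ∈ L, p.2 = w} : Set V).ncard
          ≤ ((fun k : Fin L.length => (L.get k).2) '' Set.univ).ncard :=
            Set.ncard_le_ncard this (Set.toFinite _)
        _ ≤ (Set.univ : Set (Fin L.length)).ncard := Set.ncard_image_le (Set.toFinite _)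
        _ = L.length := by simp [Set.ncard_univ]
    have h4 : (Set.univ : Set V).ncard = Fintype.card V := by
      simp [Set.ncard_univ]
    omega
  omega

end LowerBound
section Toolkit

variable {G : SimpleGraph V}

/-- From a cyclically arranged family of vertices with no chords, get a contradiction
with chordality. -/
lemma IsChordal.no_cycle_fn (hch : IsChordal G) {t : ℕ} (f : Fin (t + 4) → V)
    (hinj : Function.Injective f)
    (hadj : ∀ i : Fin (t + 4), G.Adj (f i) (f (i + 1)))
    (hchord : ∀ i j : Fin (t + 4), G.Adj (f i) (f j) → j = i + 1 ∨ i = j + 1) :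
    False := by
  have h1 : ∀ i j : Fin (t + 4), j = i + 1 → G.Adj (f i) (f j) := by
    rintro i j rfl; exact hadj i
  refine (hch (t + 4) (by omega)).false ⟨⟨f, hinj⟩, ?_⟩
  intro i j
  constructor
  · intro h
    have hc := hchord i j h
    rw [SimpleGraph.cycleGraph_adj']
    rcases hc with rfl | rfl
    · right
      rw [add_sub_cancel_left]
      rfl
    · left
      rw [add_sub_cancel_left]
      rfl
  · intro h
    rw [SimpleGraph.cycleGraph_adj'] at h
    have hone : ((1 : Fin (t + 4))).val = 1 := rfl
    rcases h with h | h
    · have h2 : i - j = 1 := Fin.ext (by rw [h, hone])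
      have h3 : i = j + 1 := by
        rw [sub_eq_iff_eq_add] at h2
        rw [h2]; exact add_comm 1 j
      exact (h1 j i h3).symm
    · have h2 : j - i = 1 := Fin.ext (by rw [h, hone])
      have h3 : j = i + 1 := by
        rw [sub_eq_iff_eq_add] at h2
        rw [h2]; exact add_comm 1 i
      exact h1 i j h3

/-- Convert a `ConnOutside` chain into an indexed path. -/
lemma ConnOutside.exists_fnpath {S : Set V} {x w : V} (h : ConnOutside G S x w) (hx : x ∉ S) :
    ∃ (t : ℕ) (p : ℕ → V), p 0 = x ∧ p t = w ∧ (∀ k < t, G.Adj (p k) (p (k + 1))) ∧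
      ∀ k ≤ t, p k ∉ S := by
  induction h with
  | refl => exact ⟨0, fun _ => x, rfl, rfl, by omega, fun k hk => by simpa using hx⟩
  | @tail b c hxb hbc ih =>
      obtain ⟨t, p, hp0, hpt, hadj, hmem⟩ := ih
      refine ⟨t + 1, fun k => if k ≤ t then p k else c, by simp [hp0], by simp, ?_, ?_⟩
      · intro k hk
        rcases Nat.lt_or_ge k t with h' | h'
        · simpa [Nat.le_of_lt h', Nat.succ_le_of_lt h'] using hadj k h'
        · have hk' : k = t := by omega
          subst hk'
          simpa [hpt] using hbc.2.2
      · intro k hk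
        by_cases h' : k ≤ t
        · simpa [h'] using hmem k h'
        · simpa [h'] using hbc.2.1

open Classical in
/-- Core lemma: if there is no adjacent white common neighbour, then chordality rules
out white connections through longer paths. -/
lemma IsChordal.forcing_core (hch : IsChordal G) {S : Set V} {u w : V}
    (hu : u ∈ S) (hw : w ∉ S) (huw : G.Adj u w)
    (hclean : ∀ x, G.Adj u x → x ∉ S → G.Adj x w → x = w) :
    ∀ x, G.Adj u x → x ∉ S → ConnOutside G S x w → x = w := by
  intro x hux hxS hconn
  by_contra hne
  set Q : ℕ → Prop := fun t => ∃ p : ℕ → V, (∀ k < t, G.Adj (p k) (p (k + 1))) ∧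
    (∀ k ≤ t, p k ∉ S) ∧ G.Adj u (p 0) ∧ p 0 ≠ w ∧ p t = w with hQdef
  have hQex : ∃ t, Q t := by
    obtain ⟨t, p, hp0, hpt, hadj, hmem⟩ := hconn.exists_fnpath hxS
    exact ⟨t, p, hadj, hmem, hp0 ▸ hux, hp0 ▸ hne, hpt⟩
  obtain ⟨p, hadj, hmem, hup0, hp0w, hptw⟩ := Nat.find_spec hQex
  set t := Nat.find hQex with ht
  have hmin : ∀ t' < t, ¬ Q t' := fun t' ht' => Nat.find_min hQex ht'
  have ht1 : 1 ≤ t := by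
    rcases Nat.eq_zero_or_pos t with h | h
    · rw [ht] at hptw h
      rw [h] at hptw
      exact absurd hptw hp0w
    · exact h
  -- no duplicate vertices
  have hdup : ∀ a b, a < b → b ≤ t → p a ≠ p b := by
    intro a b hab hbt heq
    rcases Nat.lt_or_ge b t with hblt | hbge
    · refine hmin (t - (b - a)) (by omega)
        ⟨fun k => if k ≤ a then p k else p (k + (b - a)), ?_, ?_, ?_, ?_, ?_⟩
      · intro k hk
        by_cases h1 : k + 1 ≤ a
        · simp only [h1, (by omega : k ≤ a), if_true]
          exact hadj k (by omega)
        · by_cases h2 : k ≤ a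
          · have hka : k = a := by omega
            simp only [h2, if_true, h1, if_false]
            rw [hka, heq, (by omega : a + 1 + (b - a) = b + 1)]
            exact hadj b hblt
          · simp only [h2, h1, if_false]
            rw [(by omega : k + 1 + (b - a) = k + (b - a) + 1)]
            exact hadj (k + (b - a)) (by omega)
      · intro k hk
        by_cases h2 : k ≤ a
        · simpa [h2] using hmem k (by omega)
        · simpa [h2] using hmem (k + (b - a)) (by omega)
      · simpa [(by omega : (0:ℕ) ≤ a)] using hup0
      · simpa [(by omega : (0:ℕ) ≤ a)] using hp0w
      · by_cases h2 : t - (b - a) ≤ a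
        · omega
        · simp only [h2, if_false]
          rw [(by omega : t - (b - a) + (b - a) = t)]
          exact hptw
    · have hbt' : b = t := by omega
      subst hbt'
      exact hmin a (by omega) ⟨p, fun k hk => hadj k (by omega), fun k hk => hmem k (by omega),
        hup0, hp0w, heq.symm ▸ hptw⟩
  -- no chords
  have hchordp : ∀ a b, a + 1 < b → b ≤ t → ¬ G.Adj (p a) (p b) := by
    intro a b hab hbt hadj'
    refine hmin (t - (b - a - 1)) (by omega)
      ⟨fun k => if k ≤ a then p k else p (k + (b - a - 1)), ?_, ?_, ?_, ?_, ?_⟩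
    · intro k hk
      by_cases h1 : k + 1 ≤ a
      · simp only [h1, (by omega : k ≤ a), if_true]
        exact hadj k (by omega)
      · by_cases h2 : k ≤ a
        · have hka : k = a := by omega
          simp only [h2, if_true, h1, if_false]
          rw [hka, (by omega : a + 1 + (b - a - 1) = b)]
          exact hadj'
        · simp only [h2, h1, if_false]
          rw [(by omega : k + 1 + (b - a - 1) = k + (b - a - 1) + 1)]
          exact hadj (k + (b - a - 1)) (by omega)
    · intro k hk
      by_cases h2 : k ≤ a
      · simpa [h2] using hmem k (by omega)
      · simpa [h2] using hmem (k + (b - a - 1)) (by omega)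
    · simpa [(by omega : (0:ℕ) ≤ a)] using hup0
    · simpa [(by omega : (0:ℕ) ≤ a)] using hp0w
    · by_cases h2 : t - (b - a - 1) ≤ a
      · omega
      · simp only [h2, if_false]
        rw [(by omega : t - (b - a - 1) + (b - a - 1) = t)]
        exact hptw
  -- no restarts
  have hrestart : ∀ m, 0 < m → m < t → ¬ G.Adj u (p m) := by
    intro m hm0 hmt hadj'
    refine hmin (t - m) (by omega) ⟨fun k => p (k + m), ?_, ?_, ?_, ?_, ?_⟩
    · intro k hk
      show G.Adj (p (k + m)) (p (k + 1 + m))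
      rw [(by omega : k + 1 + m = k + m + 1)]
      exact hadj (k + m) (by omega)
    · intro k hk
      exact hmem (k + m) (by omega)
    · simpa using hadj'
    · intro hcontra
      have hcontra' : p (0 + m) = w := hcontra
      rw [Nat.zero_add] at hcontra'
      exact hdup m t hmt le_rfl (hcontra'.trans hptw.symm)
    · show p (t - m + m) = w
      rw [(by omega : t - m + m = t)]
      exact hptw
  have ht2 : 2 ≤ t := by
    rcases Nat.lt_or_ge t 2 with h | h
    · have ht1' : t = 1 := by omega
      have hadj01 : G.Adj (p 0) w := by
        have h0 := hadj 0 (by omega)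
        have hp1 : p 1 = w := by rw [← ht1']; exact hptw
        rwa [hp1] at h0
      exact (hp0w (hclean (p 0) hup0 (hmem 0 (by omega)) hadj01)).elim
    · exact h
  have hp0w' : ¬ G.Adj (p 0) w := fun hadj' =>
    hp0w (hclean (p 0) hup0 (hmem 0 (by omega)) hadj')
  -- build the induced cycle  u, p 0, ..., p t
  obtain ⟨s, hs⟩ : ∃ s, t + 2 = s + 4 := ⟨t - 2, by omega⟩
  set f : Fin (s + 4) → V := fun i => if i.val = 0 then u else p (i.val - 1) with hf
  have hfval : ∀ i : Fin (s + 4), i.val ≠ 0 → f i = p (i.val - 1) := by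
    intro i hi; simp only [hf, hi, if_false]
  have hf0 : ∀ i : Fin (s + 4), i.val = 0 → f i = u := by
    intro i hi; simp only [hf, hi, if_true]
  have hvlt : ∀ i : Fin (s + 4), i.val ≤ t + 1 := fun i => by
    have := i.isLt; omega
  have hpmem : ∀ i : Fin (s + 4), i.val ≠ 0 → f i ∉ S := by
    intro i hi
    rw [hfval i hi]
    exact hmem _ (by have := hvlt i; omega)
  have hinjf : Function.Injective f := by
    intro i j hij
    by_cases hi : i.val = 0 <;> by_cases hj : j.val = 0
    · exact Fin.ext (by rw [hi, hj])
    · rw [hf0 i hi, hfval j hj] at hij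
      have hnot := hpmem j hj
      rw [hfval j hj, ← hij] at hnot
      exact absurd hu hnot
    · rw [hf0 j hj, hfval i hi] at hij
      have hnot := hpmem i hi
      rw [hfval i hi, hij] at hnot
      exact absurd hu hnot
    · rw [hfval i hi, hfval j hj] at hij
      have hit := hvlt i; have hjt := hvlt j
      rcases Nat.lt_trichotomy (i.val - 1) (j.val - 1) with hlt | heq | hgt
      · exact absurd hij (hdup _ _ hlt (by omega))
      · exact Fin.ext (by omega)
      · exact absurd hij.symm (hdup _ _ hgt (by omega))
  have hvaladd : ∀ i : Fin (s + 4), ((i + 1 : Fin (s + 4))).val = (i.val + 1) % (s + 4) := by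
    intro i
    rw [Fin.val_add]
    rfl
  have hadjf : ∀ i : Fin (s + 4), G.Adj (f i) (f (i + 1)) := by
    intro i
    rcases Nat.lt_or_ge i.val (s + 3) with hlt | hge
    · have hv1 : ((i + 1 : Fin (s + 4))).val = i.val + 1 := by
        rw [hvaladd]; exact Nat.mod_eq_of_lt (by omega)
      by_cases hi : i.val = 0
      · rw [hf0 i hi, hfval (i + 1) (by omega), hv1, hi]
        exact hup0
      · rw [hfval i hi, hfval (i + 1) (by omega), hv1]
        rw [(by have := hvlt i; omega : i.val + 1 - 1 = (i.val - 1) + 1)]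
        exact hadj (i.val - 1) (by have := i.isLt; omega)
    · have hiv : i.val = s + 3 := by have := i.isLt; omega
      have hv1 : ((i + 1 : Fin (s + 4))).val = 0 := by
        rw [hvaladd, hiv]; simp
      rw [hfval i (by omega), hf0 (i + 1) hv1, hiv]
      rw [(by omega : s + 3 - 1 = t)]
      exact hptw ▸ huw.symm
  have hchordf : ∀ i j : Fin (s + 4), G.Adj (f i) (f j) → j = i + 1 ∨ i = j + 1 := by
    have haux : ∀ i j : Fin (s + 4), i.val + 1 = j.val → j = i + 1 := by
      intro i j hij
      refine Fin.ext ?_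
      rw [hvaladd, Nat.mod_eq_of_lt (by have := j.isLt; omega : i.val + 1 < s + 4)]
      omega
    have hwrap : ∀ i j : Fin (s + 4), i.val = s + 3 → j.val = 0 → j = i + 1 := by
      intro i j hi hj
      refine Fin.ext ?_
      rw [hvaladd, hi, hj]
      simp
    intro i j hadj'
    by_cases hi : i.val = 0 <;> by_cases hj : j.val = 0
    · rw [hf0 i hi, hf0 j hj] at hadj'
      exact absurd hadj' G.irrefl
    · -- u adjacent p (j.val - 1)
      rw [hf0 i hi, hfval j hj] at hadj'
      have hjt := hvlt j
      rcases Nat.eq_or_lt_of_le (by omega : 1 ≤ j.val) with h1 | h1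
      · left; exact haux i j (by omega)
      · -- j.val - 1 ≥ 1; must be = t
        rcases Nat.lt_or_ge (j.val - 1) t with hlt | hge
        · exact absurd hadj' (hrestart (j.val - 1) (by omega) hlt)
        · have : j.val = t + 1 := by omega
          right
          exact hwrap j i (by omega) hi
    · rw [hf0 j hj, hfval i hi] at hadj'
      have hit := hvlt i
      rcases Nat.eq_or_lt_of_le (by omega : 1 ≤ i.val) with h1 | h1
      · right; exact haux j i (by omega)
      · rcases Nat.lt_or_ge (i.val - 1) t with hlt | hge
        · exact absurd hadj'.symm (hrestart (i.val - 1) (by omega) hlt)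
        · left
          exact hwrap i j (by omega) hj
    · rw [hfval i hi, hfval j hj] at hadj'
      have hit := hvlt i; have hjt := hvlt j
      set a := i.val - 1; set b := j.val - 1
      rcases Nat.lt_trichotomy a b with hlt | heq | hgt
      · rcases Nat.eq_or_lt_of_le (Nat.succ_le_of_lt hlt) with h1 | h1
        · left; exact haux i j (by omega)
        · -- chord or (a, t) with p 0?  a + 1 < b : chord, contradiction... unless endpoints special
          rcases Nat.lt_or_ge b t with hbt | hbt
          · exact absurd hadj' (hchordp a b (by omega) (by omega))
          · have hbt' : b = t := by omega
            rcases Nat.eq_zero_or_pos a with ha0 | ha0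
            · -- p 0 vs p t = w : non-adjacent
              rw [ha0, hbt', hptw] at hadj'
              exact absurd hadj' hp0w'
            · exact absurd hadj' (hchordp a b (by omega) (by omega))
      · rw [heq] at hadj'
        exact (G.irrefl hadj').elim
      · rcases Nat.eq_or_lt_of_le (Nat.succ_le_of_lt hgt) with h1 | h1
        · right; exact haux j i (by omega)
        · rcases Nat.lt_or_ge a t with hat | hat
          · exact absurd hadj'.symm (hchordp b a (by omega) (by omega))
          · have hat' : a = t := by omega
            rcases Nat.eq_zero_or_pos b with hb0 | hb0
            · rw [hb0, hat', hptw] at hadj'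
              exact absurd hadj'.symm hp0w'
            · exact absurd hadj'.symm (hchordp b a (by omega) (by omega))
  exact hch.no_cycle_fn f hinjf hadjf hchordf

end Toolkit
section Glue

variable {G : SimpleGraph V}

open Classical in
/-- Minimal anchored path inside a region. -/
lemma exists_min_anchored_path {R : Set V} {z e : V} (hze : ¬ G.Adj z e)
    (hQ : ∃ (t : ℕ) (p : ℕ → V), (∀ k < t, G.Adj (p k) (p (k + 1))) ∧
      (∀ k < t, p k ∈ R) ∧ G.Adj z (p 0) ∧ p t = e)
    (he : e ∉ R) :
    ∃ (t : ℕ) (p : ℕ → V), (∀ k < t, G.Adj (p k) (p (k + 1))) ∧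
      (∀ k < t, p k ∈ R) ∧ G.Adj z (p 0) ∧ p t = e ∧ 1 ≤ t ∧
      (∀ a b, a < b → b ≤ t → p a ≠ p b) ∧
      (∀ a b, a + 1 < b → b ≤ t → ¬ G.Adj (p a) (p b)) ∧
      (∀ m, 0 < m → m < t → ¬ G.Adj z (p m)) := by
  set Q : ℕ → Prop := fun t => ∃ p : ℕ → V, (∀ k < t, G.Adj (p k) (p (k + 1))) ∧
    (∀ k < t, p k ∈ R) ∧ G.Adj z (p 0) ∧ p t = e with hQdef
  have hQex : ∃ t, Q t := hQ
  obtain ⟨p, hadj, hmem, hzp0, hpte⟩ := Nat.find_spec hQex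
  set t := Nat.find hQex with ht
  have hmin : ∀ t' < t, ¬ Q t' := fun t' ht' => Nat.find_min hQex ht'
  have ht1 : 1 ≤ t := by
    rcases Nat.eq_zero_or_pos t with h | h
    · rw [ht] at hpte h
      rw [h] at hpte
      rw [hpte] at hzp0
      exact absurd hzp0 hze
    · exact h
  have hdup : ∀ a b, a < b → b ≤ t → p a ≠ p b := by
    intro a b hab hbt heq
    rcases Nat.lt_or_ge b t with hblt | hbge
    · refine hmin (t - (b - a)) (by omega)
        ⟨fun k => if k ≤ a then p k else p (k + (b - a)), ?_, ?_, ?_, ?_⟩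
      · intro k hk
        by_cases h1 : k + 1 ≤ a
        · simp only [h1, (by omega : k ≤ a), if_true]
          exact hadj k (by omega)
        · by_cases h2 : k ≤ a
          · have hka : k = a := by omega
            simp only [h2, if_true, h1, if_false]
            rw [hka, heq, (by omega : a + 1 + (b - a) = b + 1)]
            exact hadj b hblt
          · simp only [h2, h1, if_false]
            rw [(by omega : k + 1 + (b - a) = k + (b - a) + 1)]
            exact hadj (k + (b - a)) (by omega)
      · intro k hk
        by_cases h2 : k ≤ a
        · simpa [h2] using hmem k (by omega)
        · simpa [h2] using hmem (k + (b - a)) (by omega)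
      · simpa [(by omega : (0:ℕ) ≤ a)] using hzp0
      · by_cases h2 : t - (b - a) ≤ a
        · omega
        · simp only [h2, if_false]
          rw [(by omega : t - (b - a) + (b - a) = t)]
          exact hpte
    · have hbt' : b = t := by omega
      subst hbt'
      rw [hpte] at heq
      exact he (heq ▸ hmem a (by omega))
  have hchordp : ∀ a b, a + 1 < b → b ≤ t → ¬ G.Adj (p a) (p b) := by
    intro a b hab hbt hadj'
    refine hmin (t - (b - a - 1)) (by omega)
      ⟨fun k => if k ≤ a then p k else p (k + (b - a - 1)), ?_, ?_, ?_, ?_⟩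
    · intro k hk
      by_cases h1 : k + 1 ≤ a
      · simp only [h1, (by omega : k ≤ a), if_true]
        exact hadj k (by omega)
      · by_cases h2 : k ≤ a
        · have hka : k = a := by omega
          simp only [h2, if_true, h1, if_false]
          rw [hka, (by omega : a + 1 + (b - a - 1) = b)]
          exact hadj'
        · simp only [h2, h1, if_false]
          rw [(by omega : k + 1 + (b - a - 1) = k + (b - a - 1) + 1)]
          exact hadj (k + (b - a - 1)) (by omega)
    · intro k hk
      by_cases h2 : k ≤ a
      · simpa [h2] using hmem k (by omega)
      · simpa [h2] using hmem (k + (b - a - 1)) (by omega)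
    · simpa [(by omega : (0:ℕ) ≤ a)] using hzp0
    · by_cases h2 : t - (b - a - 1) ≤ a
      · omega
      · simp only [h2, if_false]
        rw [(by omega : t - (b - a - 1) + (b - a - 1) = t)]
        exact hpte
  have hrestart : ∀ m, 0 < m → m < t → ¬ G.Adj z (p m) := by
    intro m hm0 hmt hadj'
    refine hmin (t - m) (by omega) ⟨fun k => p (k + m), ?_, ?_, ?_, ?_⟩
    · intro k hk
      show G.Adj (p (k + m)) (p (k + 1 + m))
      rw [(by omega : k + 1 + m = k + m + 1)]
      exact hadj (k + m) (by omega)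
    · intro k hk
      exact hmem (k + m) (by omega)
    · simpa using hadj'
    · show p (t - m + m) = e
      rw [(by omega : t - m + m = t)]
      exact hpte
  exact ⟨t, p, hadj, hmem, hzp0, hpte, ht1, hdup, hchordp, hrestart⟩

/-- Glue two internally disjoint induced paths between nonadjacent `x,y` into a cycle:
contradiction with chordality. -/
lemma IsChordal.glue_core (hch : IsChordal G) {A B : Set V} {x y : V}
    (hxy : ¬ G.Adj x y) (hxy' : x ≠ y) (hxA : x ∉ A) (hxB : x ∉ B) (hyA : y ∉ A) (hyB : y ∉ B)
    (hAB : ∀ z z', z ∈ A → z' ∈ B → z ≠ z' ∧ ¬ G.Adj z z')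
    (hQA : ∃ (t : ℕ) (p : ℕ → V), (∀ k < t, G.Adj (p k) (p (k + 1))) ∧
      (∀ k < t, p k ∈ A) ∧ G.Adj x (p 0) ∧ p t = y)
    (hQB : ∃ (t : ℕ) (q : ℕ → V), (∀ k < t, G.Adj (q k) (q (k + 1))) ∧
      (∀ k < t, q k ∈ B) ∧ G.Adj y (q 0) ∧ q t = x) :
    False := by
  obtain ⟨ta, p, hadjA, hmemA, hxp0, hpty, hta1, hdupA, hchordA, hresA⟩ :=
    exists_min_anchored_path hxy hQA hyA
  obtain ⟨tb, q, hadjB, hmemB, hyq0, hqtx, htb1, hdupB, hchordB, hresB⟩ :=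
    exists_min_anchored_path (fun h => hxy h.symm) hQB hxB
  obtain ⟨s, hs⟩ : ∃ s, ta + tb + 2 = s + 4 := ⟨ta + tb - 2, by omega⟩
  -- layout: 0 ↦ x, 1..ta+1 ↦ p 0..p ta (p ta = y), ta+2..ta+tb+1 ↦ q 0..q (tb-1)
  set f : Fin (s + 4) → V := fun i =>
    if i.val = 0 then x else if i.val ≤ ta + 1 then p (i.val - 1) else q (i.val - ta - 2) with hf
  have hneA : ∀ a, a < ta → p a ≠ x := fun a ha h => hxA (h ▸ hmemA a ha)
  have hneB : ∀ b, b < tb → q b ≠ x := fun b hb h => hxB (h ▸ hmemB b hb)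
  have hyneA : ∀ a, a < ta → p a ≠ y := fun a ha h => hyA (h ▸ hmemA a ha)
  have hyneB : ∀ b, b < tb → q b ≠ y := fun b hb h => hyB (h ▸ hmemB b hb)
  have hvlt : ∀ i : Fin (s + 4), i.val ≤ ta + tb + 1 := fun i => by
    have := i.isLt; omega
  have hfx : ∀ i : Fin (s + 4), i.val = 0 → f i = x := by
    intro i hi; simp only [hf, hi, if_true]
  have hfp : ∀ i : Fin (s + 4), 1 ≤ i.val → i.val ≤ ta + 1 → f i = p (i.val - 1) := by
    intro i h1 h2
    have h0 : ¬ (i.val = 0) := by omega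
    simp only [hf]
    rw [if_neg h0, if_pos h2]
  have hfq : ∀ i : Fin (s + 4), ta + 2 ≤ i.val → f i = q (i.val - ta - 2) := by
    intro i h1
    have h0 : ¬ (i.val = 0) := by omega
    have h2 : ¬ (i.val ≤ ta + 1) := by omega
    simp only [hf]
    rw [if_neg h0, if_neg h2]
  have hvaladd : ∀ i : Fin (s + 4), ((i + 1 : Fin (s + 4))).val = (i.val + 1) % (s + 4) := by
    intro i; rw [Fin.val_add]; rfl
  have hsucc : ∀ i j : Fin (s + 4), i.val + 1 = j.val → j = i + 1 := by
    intro i j hij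
    refine Fin.ext ?_
    rw [hvaladd, Nat.mod_eq_of_lt (by have := j.isLt; omega : i.val + 1 < s + 4)]
    omega
  have hwrap : ∀ i j : Fin (s + 4), i.val = s + 3 → j.val = 0 → j = i + 1 := by
    intro i j hi hj
    refine Fin.ext ?_
    rw [hvaladd, hi, hj]
    simp
  -- injectivity
  have hinjf : Function.Injective f := by
    intro i j hij
    have hi4 := hvlt i; have hj4 := hvlt j
    by_contra hne
    have hvne : i.val ≠ j.val := fun h => hne (Fin.ext h)
    -- symmetric handling
    clear hne
    rcases Nat.lt_or_ge i.val 1 with hi0 | hi1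
    · rw [hfx i (by omega)] at hij
      rcases le_or_gt j.val (ta + 1) with hj1 | hj1
      · rw [hfp j (by omega) hj1] at hij
        rcases Nat.lt_or_ge (j.val - 1) ta with h | h
        · exact hneA _ h hij.symm
        · have hpy : p (j.val - 1) = y := by rw [(by omega : j.val - 1 = ta)]; exact hpty
          exact hxy' (hij.trans hpy)
      · rw [hfq j (by omega)] at hij
        exact hneB _ (by omega) hij.symm
    · rcases Nat.lt_or_ge j.val 1 with hj0 | hj1
      · rw [hfx j (by omega)] at hij
        rcases le_or_gt i.val (ta + 1) with hi2 | hi2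
        · rw [hfp i hi1 hi2] at hij
          rcases Nat.lt_or_ge (i.val - 1) ta with h | h
          · exact hneA _ h hij
          · have hpy : p (i.val - 1) = y := by rw [(by omega : i.val - 1 = ta)]; exact hpty
            exact hxy' (hij.symm.trans hpy)
        · rw [hfq i (by omega)] at hij
          exact hneB _ (by omega) hij
      · rcases le_or_gt i.val (ta + 1) with hi2 | hi2 <;>
          rcases le_or_gt j.val (ta + 1) with hj2 | hj2
        · rw [hfp i hi1 hi2, hfp j hj1 hj2] at hij
          rcases Nat.lt_trichotomy (i.val - 1) (j.val - 1) with h | h | h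
          · exact hdupA _ _ h (by omega) hij
          · omega
          · exact hdupA _ _ h (by omega) hij.symm
        · rw [hfp i hi1 hi2, hfq j (by omega)] at hij
          rcases Nat.lt_or_ge (i.val - 1) ta with h | h
          · exact (hAB _ _ (hmemA _ h) (hmemB _ (by omega))).1 hij
          · rw [(by omega : i.val - 1 = ta), hpty] at hij
            exact hyneB _ (by omega) hij.symm
        · rw [hfq i (by omega), hfp j hj1 hj2] at hij
          rcases Nat.lt_or_ge (j.val - 1) ta with h | h
          · exact (hAB _ _ (hmemA _ h) (hmemB _ (by omega))).1 hij.symm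
          · rw [(by omega : j.val - 1 = ta), hpty] at hij
            exact hyneB _ (by omega) hij
        · rw [hfq i (by omega), hfq j (by omega)] at hij
          rcases Nat.lt_trichotomy (i.val - ta - 2) (j.val - ta - 2) with h | h | h
          · exact hdupB _ _ h (by omega) hij
          · omega
          · exact hdupB _ _ h (by omega) hij.symm
  -- cycle adjacency
  have hadjf : ∀ i : Fin (s + 4), G.Adj (f i) (f (i + 1)) := by
    intro i
    have hi4 := hvlt i
    rcases Nat.lt_or_ge i.val (s + 3) with hlt | hge
    · have hv1 : ((i + 1 : Fin (s + 4))).val = i.val + 1 := by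
        rw [hvaladd]; exact Nat.mod_eq_of_lt (by omega)
      rcases Nat.lt_or_ge i.val 1 with hi0 | hi1
      · rw [hfx i (by omega), hfp (i + 1) (by omega) (by omega), hv1,
          (by omega : i.val + 1 - 1 = 0)]
        have h00 : i.val = 0 := by omega
        exact hxp0
      · rcases Nat.lt_or_ge i.val (ta + 1) with hi2 | hi2
        · rw [hfp i hi1 (by omega), hfp (i + 1) (by omega) (by omega), hv1,
            (by omega : i.val + 1 - 1 = (i.val - 1) + 1)]
          exact hadjA _ (by omega)
        · rcases Nat.lt_or_ge i.val (ta + 2) with hi3 | hi3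
          · -- i.val = ta + 1 : y → q 0
            rw [hfp i hi1 (by omega), hfq (i + 1) (by omega), hv1,
              (by omega : i.val - 1 = ta), hpty, (by omega : i.val + 1 - ta - 2 = 0)]
            exact hyq0
          · rw [hfq i hi3, hfq (i + 1) (by omega), hv1,
              (by omega : i.val + 1 - ta - 2 = (i.val - ta - 2) + 1)]
            exact hadjB _ (by omega)
    · have hiv : i.val = s + 3 := by have := i.isLt; omega
      have hv1 : ((i + 1 : Fin (s + 4))).val = 0 := by
        rw [hvaladd, hiv]; simp
      rw [hfq i (by omega), hfx (i + 1) hv1, hiv, (by omega : s + 3 - ta - 2 = tb - 1)]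
      have := hadjB (tb - 1) (by omega)
      rwa [(by omega : tb - 1 + 1 = tb), hqtx] at this
  -- no chords
  have main : ∀ i j : Fin (s + 4), i.val ≤ j.val → G.Adj (f i) (f j) → j = i + 1 ∨ i = j + 1 := by
    intro i j hij hadj'
    have hi4 := hvlt i; have hj4 := hvlt j
    rcases Nat.lt_or_ge i.val 1 with hi0 | hi1
    · have hi0' : i.val = 0 := by omega
      rcases Nat.lt_or_ge j.val 1 with hj0 | hj1
      · rw [hfx i hi0', hfx j (by omega)] at hadj'
        exact (G.irrefl hadj').elim
      · rcases le_or_gt j.val (ta + 1) with hj2 | hj2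
        · rw [hfx i hi0', hfp j hj1 hj2] at hadj'
          rcases Nat.eq_or_lt_of_le (by omega : 1 ≤ j.val) with h1 | h1
          · exact Or.inl (hsucc i j (by omega))
          · rcases Nat.lt_or_ge (j.val - 1) ta with h | h
            · exact absurd hadj' (hresA _ (by omega) h)
            · rw [(by omega : j.val - 1 = ta), hpty] at hadj'
              exact absurd hadj' hxy
        · rw [hfx i hi0', hfq j (by omega)] at hadj'
          rcases Nat.lt_or_ge (j.val - ta - 2) (tb - 1) with h | h
          · have hcb := hchordB (j.val - ta - 2) tb (by omega) le_rfl
            rw [hqtx] at hcb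
            exact absurd hadj'.symm hcb
          · exact Or.inr (hwrap j i (by omega) hi0')
    · rcases le_or_gt i.val (ta + 1) with hi2 | hi2
      · rcases le_or_gt j.val (ta + 1) with hj2 | hj2
        · rw [hfp i hi1 hi2, hfp j (by omega) hj2] at hadj'
          set a := i.val - 1; set b := j.val - 1
          rcases Nat.lt_trichotomy a b with h | h | h
          · rcases Nat.eq_or_lt_of_le (Nat.succ_le_of_lt h) with h1 | h1
            · exact Or.inl (hsucc i j (by omega))
            · exact absurd hadj' (hchordA a b h1 (by omega))
          · rw [h] at hadj'
            exact (G.irrefl hadj').elim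
          · omega
        · rw [hfp i hi1 hi2, hfq j (by omega)] at hadj'
          rcases Nat.lt_or_ge (i.val - 1) ta with h | h
          · exact absurd hadj' (hAB _ _ (hmemA _ h) (hmemB _ (by omega))).2
          · rw [(by omega : i.val - 1 = ta), hpty] at hadj'
            rcases Nat.eq_zero_or_pos (j.val - ta - 2) with h0 | h0
            · exact Or.inl (hsucc i j (by omega))
            · exact absurd hadj' (hresB _ h0 (by omega))
      · rw [hfq i (by omega), hfq j (by omega)] at hadj'
        set a := i.val - ta - 2; set b := j.val - ta - 2
        rcases Nat.lt_trichotomy a b with h | h | h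
        · rcases Nat.eq_or_lt_of_le (Nat.succ_le_of_lt h) with h1 | h1
          · exact Or.inl (hsucc i j (by omega))
          · exact absurd hadj' (hchordB a b h1 (by omega))
        · rw [h] at hadj'
          exact (G.irrefl hadj').elim
        · omega
  have hchordf : ∀ i j : Fin (s + 4), G.Adj (f i) (f j) → j = i + 1 ∨ i = j + 1 := by
    intro i j hadj'
    rcases le_or_gt i.val j.val with h | h
    · exact main i j h hadj'
    · exact (main j i (by omega) hadj'.symm).symm
  exact hch.no_cycle_fn f hinjf hadjf hchordf

end Glue
section Dirac

variable {G : SimpleGraph V}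

lemma IsChordal.induce (hch : IsChordal G) (T : Set V) : IsChordal (G.induce T) := by
  intro n hn
  constructor
  intro e
  exact (hch n hn).false ((SimpleGraph.Embedding.induce T).comp e)

lemma induce_adj' {T : Set V} {x y : ↥T} : (G.induce T).Adj x y ↔ G.Adj x.val y.val :=
  Iff.rfl

open Classical in
lemma dirac_strong :
    ∀ (n : ℕ) {W : Type u} [Fintype W] (G : SimpleGraph W), Fintype.card W ≤ n →
      IsChordal G →
      (∀ a b : W, a ≠ b → G.Adj a b) ∨
        (∃ a b : W, a ≠ b ∧ ¬ G.Adj a b ∧ IsSimplicial G a ∧ IsSimplicial G b) := by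
  intro n
  induction n with
  | zero =>
      intro W _ G hc _
      left
      intro a b hab
      have h0 : Fintype.card W = 0 := by omega
      exact absurd (Fintype.card_pos_iff.2 ⟨a⟩) (by omega)
  | succ n ih =>
      intro W instW G hcard hch
      by_cases hcomp : ∀ a b : W, a ≠ b → G.Adj a b
      · exact Or.inl hcomp
      · push_neg at hcomp
        obtain ⟨a, b, hab, hnadj⟩ := hcomp
        right
        -- separators
        set Sep : Finset W → Prop :=
          fun s => a ∉ (s : Set W) ∧ b ∉ (s : Set W) ∧ ¬ ConnOutside G ↑s a b with hSepdef
        have hSep0 : Sep (Finset.univ \ {a, b}) := by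
          refine ⟨by simp, by simp [hab.symm], ?_⟩
          intro hconn
          rcases Relation.ReflTransGen.cases_head hconn with heq | ⟨x, ⟨ha', hx', hadj'⟩, _⟩
          · exact hab heq
          · have : x = a ∨ x = b := by
              by_contra hxab
              push_neg at hxab
              exact hx' (by simp [hxab.1, hxab.2])
            rcases this with rfl | rfl
            · exact G.irrefl hadj'
            · exact hnadj hadj'
        set msep : Set ℕ := {m | ∃ s, Sep s ∧ s.card = m} with hmsep
        have hexne : msep.Nonempty := ⟨_, _, hSep0, rfl⟩
        obtain ⟨s, hSep, hscard⟩ := Nat.sInf_mem hexne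
        have hmin : ∀ x ∈ s, ¬ Sep (s.erase x) := by
          intro x hx hSep'
          have h1 : sInf msep ≤ (s.erase x).card := Nat.sInf_le ⟨_, hSep', rfl⟩
          have h2 : (s.erase x).card < s.card := Finset.card_erase_lt_of_mem hx
          omega
        set A : W → Set W := fun c => {z | ConnOutside G ↑s c z} with hAdef
        have hArefl : ∀ c, c ∈ A c := fun c => Relation.ReflTransGen.refl
        have hAnotmem : ∀ c, c ∉ (s : Set W) → ∀ z ∈ A c, z ∉ (s : Set W) :=
          fun c hc z hz => hz.not_mem hc
        have hAclosed : ∀ c, ∀ z ∈ A c, c ∉ (s : Set W) → ∀ z', G.Adj z z' →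
            z' ∉ (s : Set W) → z' ∈ A c := by
          intro c z hz hc z' hadj' hz'
          exact hz.tail ⟨hAnotmem c hc z hz, hz', hadj'⟩
        have hAtrans : ∀ c, c ∉ (s : Set W) → ∀ z ∈ A c, ∀ z' ∈ A c, ConnOutside G ↑s z z' :=
          fun c hc z hz z' hz' => hz.symm.trans hz'
        -- neighbours in each side
        have hnbr : ∀ x ∈ s, ∀ (c d : W), c ∉ (s : Set W) → ¬ ConnOutside G ↑s c d →
            ConnOutside G ↑(s.erase x) c d → ∃ z ∈ A c, G.Adj x z := by
          intro x hx c d hc hncd hchain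
          refine Relation.ReflTransGen.head_induction_on
            (motive := fun e (_ : Relation.ReflTransGen _ e d) =>
              e ∈ A c → ∃ z ∈ A c, G.Adj x z) hchain ?_ ?_ (hArefl c)
          · intro hd
            exact absurd hd hncd
          · intro e e' hstep hrest ihP he
            by_cases hex' : e' = x
            · exact ⟨e, he, hex' ▸ hstep.2.2.symm⟩
            · refine ihP (hAclosed c e he hc e' hstep.2.2 ?_)
              intro he's
              exact hstep.2.1 (by
                simp only [Finset.coe_erase, Set.mem_diff, Set.mem_singleton_iff]
                exact ⟨he's, hex'⟩)
        have hconnAB : ∀ z, z ∈ A a → z ∈ A b → False := by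
          intro z hza hzb
          exact hSep.2.2 (hza.trans hzb.symm)
        have hABpair : ∀ z z', z ∈ A a → z' ∈ A b → z ≠ z' ∧ ¬ G.Adj z z' := by
          intro z z' hz hz'
          constructor
          · rintro rfl
            exact hconnAB z hz hz'
          · intro hadj'
            exact hconnAB z' (hAclosed a z hz hSep.1 z' hadj' (hAnotmem b hSep.2.1 z' hz')) hz'
        -- both ends have neighbours into each side
        have hsideconn : ∀ x ∈ s, (∃ z ∈ A a, G.Adj x z) ∧ (∃ z ∈ A b, G.Adj x z) := by
          intro x hx
          have hnS : ¬ (a ∉ (↑(s.erase x) : Set W) ∧ b ∉ (↑(s.erase x) : Set W) ∧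
              ¬ ConnOutside G ↑(s.erase x) a b) := hmin x hx
          push_neg at hnS
          have ha' : a ∉ (↑(s.erase x) : Set W) := by
            intro h
            exact hSep.1 (Finset.mem_coe.2 (Finset.mem_of_mem_erase (Finset.mem_coe.1 h)))
          have hb' : b ∉ (↑(s.erase x) : Set W) := by
            intro h
            exact hSep.2.1 (Finset.mem_coe.2 (Finset.mem_of_mem_erase (Finset.mem_coe.1 h)))
          have hconn' : ConnOutside G ↑(s.erase x) a b := hnS ha' hb' 
          exact ⟨hnbr x hx a b hSep.1 hSep.2.2 hconn',
            hnbr x hx b a hSep.2.1 (fun h => hSep.2.2 h.symm) hconn'.symm⟩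
        -- s is a clique
        have hclique : ∀ x ∈ (s : Set W), ∀ y ∈ (s : Set W), x ≠ y → G.Adj x y := by
          intro x hx y hy hxy
          by_contra hnxy
          obtain ⟨⟨z1a, hz1a, hxz1⟩, _⟩ := hsideconn x hx
          obtain ⟨⟨z2a, hz2a, hyz2⟩, _⟩ := hsideconn y hy
          obtain ⟨_, ⟨z1b, hz1b, hxz1'⟩⟩ := hsideconn x hx
          obtain ⟨_, ⟨z2b, hz2b, hyz2'⟩⟩ := hsideconn y hy
          have hQA : ∃ (t : ℕ) (p : ℕ → W), (∀ k < t, G.Adj (p k) (p (k + 1))) ∧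
              (∀ k < t, p k ∈ A a) ∧ G.Adj x (p 0) ∧ p t = y := by
            obtain ⟨t, p, hp0, hpt, hadjp, hmemp⟩ :=
              (hAtrans a hSep.1 z1a hz1a z2a hz2a).exists_fnpath
                (hAnotmem a hSep.1 z1a hz1a)
            have hmemA : ∀ k ≤ t, p k ∈ A a := by
              intro k hk
              induction k with
              | zero => rw [hp0]; exact hz1a
              | succ k ihk =>
                  exact hAclosed a (p k) (ihk (by omega)) hSep.1 (p (k+1))
                    (hadjp k (by omega)) (hmemp (k+1) hk)
            refine ⟨t + 1, fun k => if k ≤ t then p k else y, ?_, ?_, ?_, ?_⟩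
            · intro k hk
              rcases Nat.lt_or_ge k t with h' | h'
              · simpa [Nat.le_of_lt h', Nat.succ_le_of_lt h'] using hadjp k h'
              · have hk' : k = t := by omega
                subst hk'
                simpa [hpt] using hyz2.symm
            · intro k hk
              simpa [(by omega : k ≤ t)] using hmemA k (by omega)
            · simpa using (hp0 ▸ hxz1)
            · simp
          have hQB : ∃ (t : ℕ) (q : ℕ → W), (∀ k < t, G.Adj (q k) (q (k + 1))) ∧
              (∀ k < t, q k ∈ A b) ∧ G.Adj y (q 0) ∧ q t = x := by
            obtain ⟨t, p, hp0, hpt, hadjp, hmemp⟩ :=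
              (hAtrans b hSep.2.1 z2b hz2b z1b hz1b).exists_fnpath
                (hAnotmem b hSep.2.1 z2b hz2b)
            have hmemB : ∀ k ≤ t, p k ∈ A b := by
              intro k hk
              induction k with
              | zero => rw [hp0]; exact hz2b
              | succ k ihk =>
                  exact hAclosed b (p k) (ihk (by omega)) hSep.2.1 (p (k+1))
                    (hadjp k (by omega)) (hmemp (k+1) hk)
            refine ⟨t + 1, fun k => if k ≤ t then p k else x, ?_, ?_, ?_, ?_⟩
            · intro k hk
              rcases Nat.lt_or_ge k t with h' | h'
              · simpa [Nat.le_of_lt h', Nat.succ_le_of_lt h'] using hadjp k h'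
              · have hk' : k = t := by omega
                subst hk'
                simpa [hpt] using hxz1'.symm
            · intro k hk
              simpa [(by omega : k ≤ t)] using hmemB k (by omega)
            · simpa using (hp0 ▸ hyz2')
            · simp
          exact hch.glue_core hnxy hxy
            (fun h => hAnotmem a hSep.1 x h hx) (fun h => hAnotmem b hSep.2.1 x h hx)
            (fun h => hAnotmem a hSep.1 y h hy) (fun h => hAnotmem b hSep.2.1 y h hy)
            (fun z z' hz hz' => hABpair z z' hz hz') hQA hQB
        -- one simplicial vertex on each side
        have side : ∀ (c other : W), c ∉ (s : Set W) → other ∉ A c → other ∉ (s : Set W) →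
            ∃ v ∈ A c, IsSimplicial G v := by
          intro c other hc hoA hos
          set T : Set W := A c ∪ ↑s with hT
          have hoT : other ∉ T := by
            rintro (h | h)
            · exact hoA h
            · exact hos h
          have hcardT : Fintype.card ↥T ≤ n := by
            have hlt : Fintype.card ↥T < Fintype.card W := by
              refine Fintype.card_lt_of_injective_of_notMem
                (fun z : ↥T => (z : W)) Subtype.val_injective (b := other) ?_
              rintro ⟨⟨z, hz⟩, rfl⟩
              exact hoT hz
            omega
          have hchT : IsChordal (G.induce T) := hch.induce T
          have hnbrT : ∀ z ∈ A c, ∀ z', G.Adj z z' → z' ∈ T := by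
            intro z hz z' hadj'
            by_cases hz's : z' ∈ (s : Set W)
            · exact Or.inr hz's
            · exact Or.inl (hAclosed c z hz hc z' hadj' hz's)
          -- a simplicial vertex of the induced graph lying in `A c` transfers
          have htrans : ∀ (v : ↥T), v.val ∈ A c → IsSimplicial (G.induce T) v →
              IsSimplicial G v.val := by
            intro v hvA hvsimp
            rw [IsSimplicial, SimpleGraph.isClique_iff] at hvsimp ⊢
            intro z1 hz1 z2 hz2 hz12
            have hz1T : z1 ∈ T := hnbrT v.val hvA z1 hz1
            have hz2T : z2 ∈ T := hnbrT v.val hvA z2 hz2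
            have := hvsimp (x := ⟨z1, hz1T⟩) (y := ⟨z2, hz2T⟩)
              (by exact hz1) (by exact hz2) (by simpa using hz12)
            exact this
          rcases ih (G.induce T) hcardT hchT with hcompT | ⟨v1, v2, hv12, hnadj12, hs1, hs2⟩
          · -- complete: c itself is simplicial
            refine ⟨c, hArefl c, ?_⟩
            refine htrans ⟨c, Or.inl (hArefl c)⟩ (hArefl c) ?_
            rw [IsSimplicial, SimpleGraph.isClique_iff]
            intro z1 hz1 z2 hz2 hz12
            exact hcompT z1 z2 hz12
          · -- two nonadjacent simplicials: not both in s
            have hnotboth : ¬ (v1.val ∈ (s : Set W) ∧ v2.val ∈ (s : Set W)) := by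
              rintro ⟨h1, h2⟩
              exact hnadj12 (hclique v1.val h1 v2.val h2 (fun h => hv12 (Subtype.ext h)))
            rcases v1.property with h1A | h1s
            · exact ⟨v1.val, h1A, htrans v1 h1A hs1⟩
            · rcases v2.property with h2A | h2s
              · exact ⟨v2.val, h2A, htrans v2 h2A hs2⟩
              · exact absurd ⟨h1s, h2s⟩ hnotboth
        obtain ⟨va, hvaA, hvasimp⟩ := side a b hSep.1 (fun h => hSep.2.2 h) hSep.2.1
        obtain ⟨vb, hvbB, hvbsimp⟩ := side b a hSep.2.1 (fun h => hSep.2.2 h.symm) hSep.1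
        obtain ⟨hne, hnadj'⟩ := hABpair va vb hvaA hvbB
        exact ⟨va, vb, hne, hnadj', hvasimp, hvbsimp⟩

lemma IsChordal.exists_simplicial [Fintype V] [Nonempty V] (hch : IsChordal G) :
    ∃ v, IsSimplicial G v := by
  rcases dirac_strong (Fintype.card V) G le_rfl hch with hcomp | ⟨a, _, _, _, hsa, _⟩
  · obtain ⟨v⟩ := ‹Nonempty V›
    refine ⟨v, ?_⟩
    rw [IsSimplicial, SimpleGraph.isClique_iff]
    intro z1 hz1 z2 hz2 hz12
    exact hcomp z1 z2 hz12
  · exact ⟨a, hsa⟩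

end Dirac
section PEO

variable {G : SimpleGraph V}

open Classical in
lemma IsChordal.peo_aux [Fintype V] [Nonempty V] (hch : IsChordal G) (s : Finset V) :
    ∃ p : ℕ → V,
      (∀ i, i < s.card → p i ∈ s) ∧
      (∀ v ∈ s, ∃ i, i < s.card ∧ p i = v) ∧
      (∀ i j, i < j → j < s.card → p i ≠ p j) ∧
      (∀ i j k, i < j → j < k → k < s.card →
        G.Adj (p i) (p j) → G.Adj (p i) (p k) → G.Adj (p j) (p k)) := by
  induction s using Finset.strongInduction with
  | _ s ihs =>
    rcases Finset.eq_empty_or_nonempty s with rfl | hs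
    · exact ⟨fun _ => Classical.arbitrary V, by simp, by simp, by simp, by simp⟩
    · have hne : Nonempty ↥(s : Set V) := ⟨⟨hs.choose, hs.choose_spec⟩⟩
      obtain ⟨⟨v, hvs⟩, hvsimp⟩ := (hch.induce (s : Set V)).exists_simplicial
      obtain ⟨p', hmem', hsurj', hinj', htail'⟩ :=
        ihs (s.erase v) (Finset.erase_ssubset hvs)
      have hcard : (s.erase v).card = s.card - 1 := Finset.card_erase_of_mem hvs
      have hcard1 : 1 ≤ s.card := Finset.card_pos.2 hs
      refine ⟨fun k => if k = 0 then v else p' (k - 1), ?_, ?_, ?_, ?_⟩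
      · intro i hi
        by_cases h0 : i = 0
        · simpa [h0] using hvs
        · simp only [h0, if_false]
          exact Finset.mem_of_mem_erase (hmem' (i - 1) (by omega))
      · intro w hw
        by_cases hwv : w = v
        · exact ⟨0, by omega, by simp [hwv]⟩
        · obtain ⟨i, hi, hpi⟩ := hsurj' w (Finset.mem_erase.2 ⟨hwv, hw⟩)
          exact ⟨i + 1, by omega, by simpa using hpi⟩
      · intro i j hij hj
        have hj0 : ¬ (j = 0) := by omega
        by_cases h0 : i = 0
        · simp only [h0, if_true, hj0, if_false]
          intro h
          exact (Finset.mem_erase.1 (hmem' (j - 1) (by omega))).1 h.symm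
        · simp only [h0, hj0, if_false]
          exact hinj' (i - 1) (j - 1) (by omega) (by omega)
      · intro i j k hij hjk hk
        have hj0 : ¬ (j = 0) := by omega
        have hk0 : ¬ (k = 0) := by omega
        by_cases h0 : i = 0
        · simp only [h0, if_true, hj0, hk0, if_false]
          intro hadj1 hadj2
          have hjmem := hmem' (j - 1) (by omega)
          have hkmem := hmem' (k - 1) (by omega)
          have hjs : p' (j - 1) ∈ (s : Set V) := Finset.mem_coe.2 (Finset.mem_of_mem_erase hjmem)
          have hks : p' (k - 1) ∈ (s : Set V) := Finset.mem_coe.2 (Finset.mem_of_mem_erase hkmem)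
          have hne' : p' (j - 1) ≠ p' (k - 1) := hinj' (j - 1) (k - 1) (by omega) (by omega)
          rw [IsSimplicial, SimpleGraph.isClique_iff] at hvsimp
          have hm1 : (⟨p' (j-1), hjs⟩ : ↥(s : Set V)) ∈
              (G.induce (s : Set V)).neighborSet ⟨v, hvs⟩ := hadj1
          have hm2 : (⟨p' (k-1), hks⟩ : ↥(s : Set V)) ∈
              (G.induce (s : Set V)).neighborSet ⟨v, hvs⟩ := hadj2
          have := hvsimp hm1 hm2 (by simp [Subtype.ext_iff, hne'])
          exact this
        · simp only [h0, hj0, hk0, if_false]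
          exact htail' (i - 1) (j - 1) (k - 1) (by omega) (by omega) (by omega)

end PEO
section Greedy

variable {G : SimpleGraph V}

/-- Membership in the `j`-th PEO clique (the closed later neighbourhood of `p j`). -/
def greedyCmem (G : SimpleGraph V) (p : ℕ → V) (pos : V → ℕ) (j : ℕ) (z : V) : Prop :=
  z = p j ∨ (G.Adj (p j) z ∧ j < pos z)

/-- The greedy selection of clique indices along a PEO. -/
noncomputable def greedyInI (G : SimpleGraph V) (p : ℕ → V) (pos : V → ℕ) (n : ℕ) :
    ℕ → Prop :=
  WellFounded.fix Nat.lt_wfRel.wf (fun i ih => i < n ∧ ∃ u, G.Adj (p i) u ∧ i < pos u ∧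
    ∀ j, ∀ (h : j < i), ih j h → ¬ (greedyCmem G p pos j (p i) ∧ greedyCmem G p pos j u))

lemma greedyInI_iff (G : SimpleGraph V) (p : ℕ → V) (pos : V → ℕ) (n : ℕ) (i : ℕ) :
    greedyInI G p pos n i ↔ (i < n ∧ ∃ u, G.Adj (p i) u ∧ i < pos u ∧
      ∀ j, j < i → greedyInI G p pos n j →
        ¬ (greedyCmem G p pos j (p i) ∧ greedyCmem G p pos j u)) := by
  rw [greedyInI, WellFounded.fix_eq]

open Classical in
/-- Descending list of forces for indices `< i`. -/
noncomputable def greedyList (I : ℕ → Prop) (xw p : ℕ → V) : ℕ → List (V × V)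
  | 0 => []
  | i+1 => (if I i then [(xw i, p i)] else []) ++ greedyList I xw p i

lemma greedyList_zero (I : ℕ → Prop) (xw p : ℕ → V) : greedyList I xw p 0 = [] := rfl

open Classical in
lemma greedyList_succ (I : ℕ → Prop) (xw p : ℕ → V) (i : ℕ) :
    greedyList I xw p (i+1) = (if I i then [(xw i, p i)] else []) ++ greedyList I xw p i := rfl

open Classical in
lemma upper_bound_exists [Fintype V] [Nonempty V] (hch : IsChordal G) :
    psdNum G + ccNum G ≤ Fintype.card V := by
  classical
  set n := Fintype.card V with hn
  obtain ⟨p, hmem, hsurj, hinj, htail⟩ := hch.peo_aux Finset.univ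
  rw [Finset.card_univ, ← hn] at hmem hsurj hinj htail
  have hsurj' : ∀ v : V, ∃ i, i < n ∧ p i = v := fun v => hsurj v (Finset.mem_univ v)
  set pos : V → ℕ := fun v => Classical.choose (hsurj' v) with hposdef
  have hpos1 : ∀ v, pos v < n := fun v => (Classical.choose_spec (hsurj' v)).1
  have hpos2 : ∀ v, p (pos v) = v := fun v => (Classical.choose_spec (hsurj' v)).2
  have huniq : ∀ i, i < n → pos (p i) = i := by
    intro i hi
    by_contra hne
    rcases Nat.lt_or_ge (pos (p i)) i with h | h
    · exact hinj _ _ h hi (hpos2 (p i))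
    · exact hinj _ _ (by omega) (hpos1 (p i)) (hpos2 (p i)).symm
  set I : ℕ → Prop := greedyInI G p pos n with hI
  set Cset : ℕ → Set V := fun j => {z | greedyCmem G p pos j z} with hCset
  have hIlt : ∀ i, I i → i < n := fun i hi => ((greedyInI_iff G p pos n i).1 hi).1
  -- witness function
  set xw : ℕ → V := fun i =>
    if h : I i then Classical.choose ((greedyInI_iff G p pos n i).1 h).2
    else Classical.arbitrary V with hxw
  have hxwspec : ∀ i, I i → G.Adj (p i) (xw i) ∧ i < pos (xw i) ∧
      ∀ j, j < i → I j → ¬ ((p i) ∈ Cset j ∧ (xw i) ∈ Cset j) := by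
    intro i hi
    have h := Classical.choose_spec ((greedyInI_iff G p pos n i).1 hi).2
    rw [hxw]
    simp only [hi, dif_pos]
    exact h
  -- the white set and black set
  set W : Set V := {v | ∃ k, I k ∧ p k = v} with hW
  set B : Set V := Wᶜ with hB
  -- cliques
  have hclique : ∀ j, j < n → G.IsClique (Cset j) := by
    intro j hj
    rw [SimpleGraph.isClique_iff]
    intro z hz z' hz' hzz'
    rcases hz with hz | ⟨hz, hzpos⟩ <;> rcases hz' with hz' | ⟨hz', hz'pos⟩
    · exact absurd (hz.trans hz'.symm) hzz'
    · exact hz ▸ hz'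
    · exact (hz' ▸ hz).symm
    · -- both later neighbours
      have h1 : p (pos z) = z := hpos2 z
      have h2 : p (pos z') = z' := hpos2 z'
      have hne : pos z ≠ pos z' := by
        intro h
        exact hzz' (h1 ▸ h ▸ h2)
      rcases Nat.lt_or_ge (pos z) (pos z') with h | h
      · have := htail j (pos z) (pos z') hzpos h (hpos1 z')
          (by rw [h1]; exact hz) (by rw [h2]; exact hz')
        rwa [h1, h2] at this
      · have := htail j (pos z') (pos z) hz'pos (by omega) (hpos1 z)
          (by rw [h2]; exact hz') (by rw [h1]; exact hz)
        rw [h1, h2] at this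
        exact this.symm
  -- cover property
  have hcover : ∀ u v, G.Adj u v → ∃ j, I j ∧ u ∈ Cset j ∧ v ∈ Cset j := by
    have main : ∀ u v, G.Adj u v → pos u < pos v → ∃ j, I j ∧ u ∈ Cset j ∧ v ∈ Cset j := by
      intro u v hadj hposlt
      by_cases hcase : ∃ j, j < pos u ∧ I j ∧ u ∈ Cset j ∧ v ∈ Cset j
      · obtain ⟨j, _, h⟩ := hcase
        exact ⟨j, h⟩
      · push_neg at hcase
        have hIu : I (pos u) := by
          rw [hI, greedyInI_iff]
          refine ⟨hpos1 u, v, ?_, hposlt, ?_⟩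
          · rw [hpos2 u]; exact hadj
          · intro j hj hIj hmem'
            rw [hpos2 u] at hmem'
            exact hcase j hj hIj hmem'.1 hmem'.2
        refine ⟨pos u, hIu, Or.inl (hpos2 u).symm, Or.inr ⟨?_, hposlt⟩⟩
        rw [hpos2 u]
        exact hadj
    intro u v hadj
    have hne : pos u ≠ pos v := by
      intro h
      exact hadj.ne ((hpos2 u).symm.trans (h ▸ hpos2 v))
    rcases Nat.lt_or_ge (pos u) (pos v) with h | h
    · exact main u v hadj h
    · obtain ⟨j, h1, h2, h3⟩ := main v u hadj.symm (by omega)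
      exact ⟨j, h1, h3, h2⟩
  -- intermediate black sets
  set Sst : ℕ → Set V := fun i => B ∪ {v | ∃ k, I k ∧ i ≤ k ∧ p k = v} with hSst
  have hSst0 : Sst 0 = Set.univ := by
    apply Set.eq_univ_of_forall
    intro v
    by_cases hv : v ∈ W
    · obtain ⟨k, hk, hpk⟩ := hv
      exact Or.inr ⟨k, hk, Nat.zero_le k, hpk⟩
    · exact Or.inl hv
  have hSstn : Sst n = B := by
    apply Set.eq_of_subset_of_subset
    · rintro v (hv | ⟨k, hk, hkn, rfl⟩)
      · exact hv
      · exact absurd (hIlt k hk) (by omega)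
    · exact Set.subset_union_left
  -- validity of each force
  have hforce : ∀ i, I i → PSDForce G (Sst (i+1)) (xw i) (p i) := by
    intro i hi
    obtain ⟨hadj_i, hpos_i, hblock⟩ := hxwspec i hi
    have hin : i < n := hIlt i hi
    have hu : xw i ∈ Sst (i+1) := by
      by_cases hxwW : xw i ∈ W
      · obtain ⟨k, hk, hpk⟩ := hxwW
        have hkn : k < n := hIlt k hk
        have hkpos : k = pos (xw i) := by
          have := huniq k hkn
          rw [hpk] at this
          omega
        exact Or.inr ⟨k, hk, by omega, hpk⟩
      · exact Or.inl hxwW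
    have hw : p i ∉ Sst (i+1) := by
      rintro (hB' | ⟨k, hk, hki, hpk⟩)
      · exact hB' ⟨i, hi, rfl⟩
      · have hkn : k < n := hIlt k hk
        have : k = i := by
          have h1 := huniq k hkn
          have h2 := huniq i hin
          rw [hpk] at h1
          omega
        omega
    have huw : G.Adj (xw i) (p i) := hadj_i.symm
    refine ⟨hu, hw, huw, ?_⟩
    refine hch.forcing_core hu hw huw ?_
    intro x hx hxS hxadj
    have hxW : x ∈ W := by
      by_contra hxW
      exact hxS (Or.inl hxW)
    obtain ⟨j, hj, hpj⟩ := hxW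
    have hji : ¬ (i + 1 ≤ j) := fun h => hxS (Or.inr ⟨j, hj, h, hpj⟩)
    rcases Nat.eq_or_lt_of_le (by omega : j ≤ i) with hji' | hji'
    · rw [← hpj, hji']
    · exfalso
      refine hblock j hji' hj ⟨Or.inr ⟨?_, ?_⟩, Or.inr ⟨?_, ?_⟩⟩
      · rw [hpj]; exact hxadj
      · rw [huniq i hin]; exact hji'
      · rw [hpj]; exact hx.symm
      · omega
  -- the process is valid
  have hSeq : ∀ i, ¬ I i → Sst (i + 1) = Sst i := by
    intro i hi
    apply Set.eq_of_subset_of_subset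
    · rintro v (hv | ⟨k, hk, hki, hpk⟩)
      · exact Or.inl hv
      · exact Or.inr ⟨k, hk, by omega, hpk⟩
    · rintro v (hv | ⟨k, hk, hki, hpk⟩)
      · exact Or.inl hv
      · have : ¬ (k = i) := fun h => hi (h ▸ hk)
        exact Or.inr ⟨k, hk, by omega, hpk⟩
  have hSins : ∀ i, I i → insert (p i) (Sst (i + 1)) = Sst i := by
    intro i hi
    apply Set.eq_of_subset_of_subset
    · rintro v hv
      rcases Set.mem_insert_iff.1 hv with rfl | (hv | ⟨k, hk, hki, hpk⟩)
      · exact Or.inr ⟨i, hi, le_rfl, rfl⟩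
      · exact Or.inl hv
      · exact Or.inr ⟨k, hk, by omega, hpk⟩
    · rintro v (hv | ⟨k, hk, hki, hpk⟩)
      · exact Set.mem_insert_iff.2 (Or.inr (Or.inl hv))
      · rcases Nat.eq_or_lt_of_le hki with h | h
        · exact Set.mem_insert_iff.2 (Or.inl (by rw [← hpk, ← h]))
        · exact Set.mem_insert_iff.2 (Or.inr (Or.inr ⟨k, hk, by omega, hpk⟩))
  have hvalid : ∀ i, PSDValid G (Sst i) (greedyList I xw p i) ∧
      applyForces (Sst i) (greedyList I xw p i) = Sst 0 := by
    intro i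
    induction i with
    | zero => exact ⟨trivial, rfl⟩
    | succ i ihi =>
        by_cases hi : I i
        · have hlist : greedyList I xw p (i+1) = (xw i, p i) :: greedyList I xw p i := by
            rw [greedyList_succ, if_pos hi]
            rfl
          rw [hlist]
          constructor
          · refine ⟨hforce i hi, ?_⟩
            rw [hSins i hi]
            exact ihi.1
          · rw [applyForces_cons]
            show applyForces (insert (p i) (Sst (i+1))) (greedyList I xw p i) = Sst 0
            rw [hSins i hi]
            exact ihi.2
        · have hlist : greedyList I xw p (i+1) = greedyList I xw p i := by
            rw [greedyList_succ, if_neg hi]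
            rfl
          rw [hlist, hSeq i hi]
          exact ihi
  have hforcing : IsPSDForcingSet G B := by
    refine ⟨greedyList I xw p n, ?_, ?_⟩
    · rw [← hSstn]
      exact (hvalid n).1
    · rw [← hSstn, (hvalid n).2, hSst0]
  -- sizes
  set IFin : Finset ℕ := (Finset.range n).filter I with hIFin
  have hmemIFin : ∀ k, k ∈ IFin ↔ I k := by
    intro k
    simp only [hIFin, Finset.mem_filter, Finset.mem_range]
    exact ⟨fun h => h.2, fun h => ⟨hIlt k h, h⟩⟩
  have hWfin : W = ↑(IFin.image p) := by
    apply Set.eq_of_subset_of_subset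
    · rintro v ⟨k, hk, hpk⟩
      exact Finset.mem_coe.2 (Finset.mem_image.2 ⟨k, (hmemIFin k).2 hk, hpk⟩)
    · rintro v hv
      obtain ⟨k, hk, hpk⟩ := Finset.mem_image.1 (Finset.mem_coe.1 hv)
      exact ⟨k, (hmemIFin k).1 hk, hpk⟩
  have hWcard : W.ncard = IFin.card := by
    rw [hWfin, Set.ncard_coe_finset]
    apply Finset.card_image_of_injOn
    intro a ha b hb hab
    have han : a < n := hIlt a ((hmemIFin a).1 ha)
    have hbn : b < n := hIlt b ((hmemIFin b).1 hb)
    by_contra hne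
    rcases Nat.lt_or_ge a b with h | h
    · exact hinj a b h hbn hab
    · exact hinj b a (by omega) han hab.symm
  have hBcard : B.ncard = n - IFin.card := by
    have := Set.ncard_add_ncard_compl W
    rw [Nat.card_eq_fintype_card, ← hn] at this
    rw [hB]
    omega
  have hIFincard : IFin.card ≤ n := by
    calc IFin.card ≤ (Finset.range n).card := Finset.card_filter_le _ _
      _ = n := Finset.card_range n
  have hpsd : psdNum G ≤ n - IFin.card := by
    rw [← hBcard]
    exact Nat.sInf_le ⟨B, rfl, hforcing⟩
  -- the clique cover
  set 𝒞 : Finset (Set V) := IFin.image (fun i => Cset i) with h𝒞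
  have hcov : IsCliqueCover G 𝒞 := by
    constructor
    · intro C hC
      obtain ⟨i, hi, rfl⟩ := Finset.mem_image.1 hC
      exact hclique i (hIlt i ((hmemIFin i).1 hi))
    · intro u v huv
      obtain ⟨j, hj, hju, hjv⟩ := hcover u v huv
      exact ⟨Cset j, Finset.mem_image.2 ⟨j, (hmemIFin j).2 hj, rfl⟩, hju, hjv⟩
  have hcc : ccNum G ≤ IFin.card := by
    calc ccNum G ≤ 𝒞.card := Nat.sInf_le ⟨𝒞, rfl, hcov⟩
      _ ≤ IFin.card := Finset.card_image_le
  omega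

end Greedy
section Final

lemma exists_clique_cover [Fintype V] (G : SimpleGraph V) :
    ∃ 𝒞 : Finset (Set V), IsCliqueCover G 𝒞 := by
  classical
  refine ⟨((Finset.univ : Finset (V × V)).filter (fun e => G.Adj e.1 e.2)).image
    (fun e => ({e.1, e.2} : Set V)), ?_, ?_⟩
  · intro C hC
    obtain ⟨e, he, rfl⟩ := Finset.mem_image.1 hC
    have hadj : G.Adj e.1 e.2 := (Finset.mem_filter.1 he).2
    rw [SimpleGraph.isClique_iff]
    rintro x (rfl | rfl) y (rfl | rfl) hxy
    · exact absurd rfl hxy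
    · exact hadj
    · exact hadj.symm
    · exact absurd rfl hxy
  · intro u v huv
    refine ⟨{u, v}, Finset.mem_image.2 ⟨(u, v), Finset.mem_filter.2 ⟨Finset.mem_univ _, huv⟩, rfl⟩,
      Or.inl rfl, Or.inr rfl⟩

end Final

/-- For every chordal graph `G`,
`Z₊(G) = |V(G)| − cc(G)`. -/
theorem psdNum_eq_card_sub_ccNum {V : Type*} [Fintype V] (G : SimpleGraph V)
    (hG : IsChordal G) : psdNum G = Fintype.card V - ccNum G := by
  classical
  rcases isEmpty_or_nonempty V with hemp | hne
  · have hpsd0 : psdNum G = 0 := by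
      refine Nat.sInf_eq_zero.2 (Or.inl ⟨∅, Set.ncard_empty V, [], trivial, ?_⟩)
      show (∅ : Set V) = Set.univ
      exact (Set.univ_eq_empty_iff.2 hemp).symm
    have hcard0 : Fintype.card V = 0 := Fintype.card_eq_zero
    rw [hpsd0, hcard0]
    omega
  · have hpsdne : {m | ∃ B : Set V, B.ncard = m ∧ IsPSDForcingSet G B}.Nonempty :=
      ⟨(Set.univ : Set V).ncard, Set.univ, rfl, [], trivial, rfl⟩
    obtain ⟨B₀, hB₀card, hB₀⟩ := Nat.sInf_mem hpsdne
    have hccne : {m | ∃ 𝒞 : Finset (Set V), 𝒞.card = m ∧ IsCliqueCover G 𝒞}.Nonempty := by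
      obtain ⟨𝒞, h𝒞⟩ := exists_clique_cover G
      exact ⟨𝒞.card, 𝒞, rfl, h𝒞⟩
    obtain ⟨𝒞₀, h𝒞₀card, h𝒞₀⟩ := Nat.sInf_mem hccne
    have hlow : Fintype.card V ≤ psdNum G + ccNum G := by
      have := card_le_forcing_add_cover hB₀ h𝒞₀
      rw [hB₀card, h𝒞₀card] at this
      exact this
    have hup : psdNum G + ccNum G ≤ Fintype.card V := upper_bound_exists hG
    omega
end

section
/- For every finite simple graph G, the tree cover number is at most the positive zero forcing number: T(G) ≤ Z_+(G). -/
/-! Basic definitions for zero forcing and positive (semidefinite) zero forcing. -/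

variable {V : Type*}

open Classical in
noncomputable def updRoot (r : V → V) (p : V × V) : V → V :=
  fun v => if v = p.2 then r p.1 else r v

def TreeStruct (G : SimpleGraph V) (F : Set V) : Prop :=
  ∃ (ρ : V) (pf : V → V) (t : V → ℕ), ρ ∈ F ∧
    (∀ v ∈ F, v ≠ ρ → pf v ∈ F ∧ G.Adj (pf v) v ∧ t (pf v) < t v) ∧
    (∀ a ∈ F, ∀ b ∈ F, G.Adj a b → (a ≠ ρ ∧ b = pf a) ∨ (b ≠ ρ ∧ a = pf b))

def GoodState (G : SimpleGraph V) (B S : Set V) (r : V → V) : Prop :=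
  (∀ v ∈ S, r v ∈ B) ∧
  (∀ v ∈ S, r v ∈ S ∧ r (r v) = r v) ∧
  (∀ w₁ w₂, w₁ ∉ S → w₂ ∉ S → ConnOutside G S w₁ w₂ →
     ∀ x₁ ∈ S, ∀ x₂ ∈ S, G.Adj x₁ w₁ → G.Adj x₂ w₂ → r x₁ = r x₂ → x₁ = x₂) ∧
  (∀ c, {v | v ∈ S ∧ r v = c} = ∅ ∨ TreeStruct G {v | v ∈ S ∧ r v = c})

lemma connOutside_mono {G : SimpleGraph V} {S S' : Set V} (h : S ⊆ S') {a b : V}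
    (hc : ConnOutside G S' a b) : ConnOutside G S a b :=
  by
    refine Relation.ReflTransGen.mono ?_ _ _ hc
    rintro _ _ ⟨h1, h2, h3⟩
    exact ⟨fun hx => h1 (h hx), fun hx => h2 (h hx), h3⟩

lemma connOutside_symm {G : SimpleGraph V} {S : Set V} {a b : V}
    (hc : ConnOutside G S a b) : ConnOutside G S b a :=
  by
    unfold ConnOutside at *
    induction hc with
    | refl => exact Relation.ReflTransGen.refl
    | tail _ hbc ih =>
      obtain ⟨h1, h2, h3⟩ := hbc
      exact Relation.ReflTransGen.head ⟨h2, h1, h3.symm⟩ ih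

lemma goodState_step {G : SimpleGraph V} {B S : Set V} {r : V → V} {u y : V}
    (hgs : GoodState G B S r) (hf : PSDForce G S u y) :
    GoodState G B (insert y S) (updRoot r (u, y)) := by
  classical
  obtain ⟨hB, hR, hJ, hT⟩ := hgs
  obtain ⟨huS, hyS, hAdj, hrule⟩ := hf
  set r' := updRoot r (u, y) with hr'def
  have hr'y : r' y = r u := by simp [hr'def, updRoot]
  have hr'ne : ∀ v, v ≠ y → r' v = r v := fun v hv => by simp [hr'def, updRoot, hv]
  have hSne : ∀ v ∈ S, v ≠ y := fun v hv h => hyS (h ▸ hv)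
  refine ⟨?_, ?_, ?_, ?_⟩
  · -- roots in B
    intro v hv
    rcases Set.mem_insert_iff.mp hv with rfl | hv
    · rw [hr'y]; exact hB u huS
    · rw [hr'ne v (hSne v hv)]; exact hB v hv
  · -- root idempotence
    intro v hv
    rcases Set.mem_insert_iff.mp hv with rfl | hv
    · rw [hr'y]
      refine ⟨Set.mem_insert_of_mem _ (hR u huS).1, ?_⟩
      rw [hr'ne _ (hSne _ (hR u huS).1)]
      exact (hR u huS).2
    · rw [hr'ne v (hSne v hv)]
      refine ⟨Set.mem_insert_of_mem _ (hR v hv).1, ?_⟩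
      rw [hr'ne _ (hSne _ (hR v hv).1)]
      exact (hR v hv).2
  · -- invariant J
    intro w₁ w₂ hw₁ hw₂ hconn x₁ hx₁ x₂ hx₂ ha₁ ha₂ hreq
    have hw₁S : w₁ ∉ S := fun h => hw₁ (Set.mem_insert_of_mem _ h)
    have hw₂S : w₂ ∉ S := fun h => hw₂ (Set.mem_insert_of_mem _ h)
    have hw₁y : w₁ ≠ y := fun h => hw₁ (h ▸ Set.mem_insert y S)
    have hw₂y : w₂ ≠ y := fun h => hw₂ (h ▸ Set.mem_insert y S)
    have hconnS : ConnOutside G S w₁ w₂ := connOutside_mono (Set.subset_insert y S) hconn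
    rcases Set.mem_insert_iff.mp hx₁ with hx₁y | hx₁S
    · rcases Set.mem_insert_iff.mp hx₂ with hx₂y | hx₂S
      · exact hx₁y.trans hx₂y.symm
      · exfalso
        have ha₁' : G.Adj y w₁ := hx₁y ▸ ha₁
        have hconn_w₂y : ConnOutside G S w₂ y :=
          (connOutside_symm hconnS).trans (Relation.ReflTransGen.single ⟨hw₁S, hyS, ha₁'.symm⟩)
        have hx₂u : x₂ = u := by
          refine hJ w₂ y hw₂S hyS hconn_w₂y x₂ hx₂S u huS ha₂ hAdj ?_
          have h5 := hreq
          rw [hx₁y, hr'y, hr'ne x₂ (hSne x₂ hx₂S)] at h5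
          exact h5.symm
        exact hw₂y (hrule w₂ (hx₂u ▸ ha₂) hw₂S hconn_w₂y)
    · rcases Set.mem_insert_iff.mp hx₂ with hx₂y | hx₂S
      · exfalso
        have ha₂' : G.Adj y w₂ := hx₂y ▸ ha₂
        have hconn_w₁y : ConnOutside G S w₁ y :=
          hconnS.trans (Relation.ReflTransGen.single ⟨hw₂S, hyS, ha₂'.symm⟩)
        have hx₁u : x₁ = u := by
          refine hJ w₁ y hw₁S hyS hconn_w₁y x₁ hx₁S u huS ha₁ hAdj ?_
          have h5 := hreq
          rw [hx₂y, hr'y, hr'ne x₁ (hSne x₁ hx₁S)] at h5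
          exact h5
        exact hw₁y (hrule w₁ (hx₁u ▸ ha₁) hw₁S hconn_w₁y)
      · refine hJ w₁ w₂ hw₁S hw₂S hconnS x₁ hx₁S x₂ hx₂S ha₁ ha₂ ?_
        rw [hr'ne x₁ (hSne x₁ hx₁S), hr'ne x₂ (hSne x₂ hx₂S)] at hreq
        exact hreq
  · -- tree structures
    intro c
    by_cases hc : c = r u
    · right
      have hsetEq : {v | v ∈ insert y S ∧ r' v = c} = insert y {v | v ∈ S ∧ r v = c} := by
        ext v
        by_cases hvy : v = y
        · subst hvy
          simp only [Set.mem_setOf_eq, Set.mem_insert_iff, hr'y, true_or, true_and, hc]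
          try tauto
        · simp only [Set.mem_setOf_eq, Set.mem_insert_iff, hr'ne v hvy]
          tauto
      rw [hsetEq]
      set F := {v | v ∈ S ∧ r v = c} with hFdef
      have huF : u ∈ F := ⟨huS, hc.symm⟩
      have hFne : F ≠ ∅ := fun h => (h ▸ huF : u ∈ (∅ : Set V))
      obtain ⟨ρ, pf, t, hρF, hpar, hedge⟩ := (hT c).resolve_left hFne
      have hρS : ρ ∈ S := hρF.1
      have hyρ : y ≠ ρ := fun h => hyS (h ▸ hρS)
      refine ⟨ρ, Function.update pf y u, Function.update t y (t u + 1),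
        Set.mem_insert_of_mem _ hρF, ?_, ?_⟩
      · intro v hv hvρ
        rcases Set.mem_insert_iff.mp hv with hvy | hvF
        · subst hvy
          rw [Function.update_self]
          refine ⟨Set.mem_insert_of_mem _ huF, hAdj, ?_⟩
          rw [Function.update_of_ne (hSne u huS) _ t, Function.update_self]
          omega
        · rw [Function.update_of_ne (hSne v hvF.1) _ pf]
          obtain ⟨h1, h2, h3⟩ := hpar v hvF hvρ
          refine ⟨Set.mem_insert_of_mem _ h1, h2, ?_⟩
          rw [Function.update_of_ne (hSne _ h1.1) _ t, Function.update_of_ne (hSne v hvF.1) _ t]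
          exact h3
      · intro a ha b hb hab
        rcases Set.mem_insert_iff.mp ha with hay | haF
        · rcases Set.mem_insert_iff.mp hb with hby | hbF
          · exact absurd (hay.trans hby.symm) hab.ne
          · -- a = y, b ∈ F : b = u
            rw [hay] at hab ⊢
            have hbu : b = u := hJ y y hyS hyS Relation.ReflTransGen.refl b hbF.1 u huS
              hab.symm hAdj (hbF.2.trans hc)
            left
            refine ⟨hyρ, ?_⟩
            rw [Function.update_self]
            exact hbu
        · rcases Set.mem_insert_iff.mp hb with hby | hbF
          · rw [hby] at hab ⊢
            have hau : a = u := hJ y y hyS hyS Relation.ReflTransGen.refl a haF.1 u huS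
              hab hAdj (haF.2.trans hc)
            right
            refine ⟨hyρ, ?_⟩
            rw [Function.update_self]
            exact hau
          · rcases hedge a haF b hbF hab with ⟨h1, h2⟩ | ⟨h1, h2⟩
            · left
              rw [Function.update_of_ne (hSne a haF.1) _ pf]
              exact ⟨h1, h2⟩
            · right
              rw [Function.update_of_ne (hSne b hbF.1) _ pf]
              exact ⟨h1, h2⟩
    · have hsetEq : {v | v ∈ insert y S ∧ r' v = c} = {v | v ∈ S ∧ r v = c} := by
        ext v
        by_cases hvy : v = y
        · subst hvy
          simp only [Set.mem_setOf_eq, hr'y]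
          exact ⟨fun ⟨_, h⟩ => absurd h.symm hc, fun ⟨h, _⟩ => absurd h hyS⟩
        · simp only [Set.mem_setOf_eq, Set.mem_insert_iff, hr'ne v hvy]
          tauto
      rw [hsetEq]
      exact hT c


lemma treeStruct_isTree {G : SimpleGraph V} {F : Set V} (h : TreeStruct G F) :
    (G.induce F).IsTree := by
  classical
  obtain ⟨ρ, pf, t, hρ, hpar, hedge⟩ := h
  constructor
  · -- connected
    have key : ∀ n (v : F), t (v : V) < n → (G.induce F).Reachable v ⟨ρ, hρ⟩ := by
      intro n
      induction n with
      | zero => intro v hv; omega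
      | succ n ih =>
        intro v hv
        by_cases hvρ : (v : V) = ρ
        · rw [show v = (⟨ρ, hρ⟩ : F) from Subtype.ext hvρ]
        · obtain ⟨hmem, hadj, hlt⟩ := hpar v v.2 hvρ
          have h2 : (G.induce F).Adj v ⟨pf v, hmem⟩ := hadj.symm
          exact (h2.reachable).trans (ih ⟨pf (v : V), hmem⟩ ((by omega : t (pf (v : V)) < n)))
    haveI : Nonempty F := ⟨⟨ρ, hρ⟩⟩
    exact SimpleGraph.Connected.mk
      (fun a b => (key (t a + 1) a (by omega)).trans ((key (t b + 1) b (by omega)).symm))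
  · -- acyclic
    intro v c hc
    obtain ⟨m, hm', hmax'⟩ := Finset.exists_max_image c.support.toFinset
      (fun x : F => t (x : V)) ⟨v, by simp⟩
    have hm : m ∈ c.support := List.mem_toFinset.mp hm'
    have hmax : ∀ x ∈ c.support, t (x : V) ≤ t (m : V) :=
      fun x hx => hmax' x (List.mem_toFinset.mpr hx)
    have hc' : (c.rotate m hm).IsCycle := hc.rotate hm
    have hsupp : ∀ x, x ∈ (c.rotate m hm).support → x ∈ c.support := by
      intro x hx
      rcases (SimpleGraph.Walk.mem_support_iff _).mp hx with rfl | hx'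
      · exact hm
      · exact List.mem_of_mem_tail
          (((SimpleGraph.Walk.support_rotate c m hm).mem_iff).mp hx')
    set c' := c.rotate m hm with hc'def
    clear_value c'
    cases c' with
    | nil => exact hc'.ne_nil rfl
    | cons hadj q =>
      rename_i b
      -- first edge s(m,b); last edge s(m,d)
      have hbm : (m : F) ≠ b := hadj.ne
      obtain ⟨d, hd, q', hq'⟩ := q.reverse.exists_eq_cons_of_ne hbm
      -- b = pf m
      have hb_supp : b ∈ c.support := hsupp b (by simp)
      have hd_supp : d ∈ c.support := by
        apply hsupp
        have : d ∈ q.reverse.support := by rw [hq']; simp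
        rw [SimpleGraph.Walk.support_reverse] at this
        simp [List.mem_reverse] at this
        simp [SimpleGraph.Walk.support_cons]
        exact Or.inr this
      have hGmb : G.Adj (m : V) (b : V) := hadj
      have hGmd : G.Adj (m : V) (d : V) := hd
      have hpfmax : ∀ (x : F), x ∈ c.support → G.Adj (m : V) (x : V) →
          (x : V) = pf (m : V) ∧ (m : V) ≠ ρ := by
        intro x hx hGmx
        rcases hedge (m : V) m.2 (x : V) x.2 hGmx with ⟨hmρ, h1⟩ | ⟨hxρ, h2⟩
        · exact ⟨h1, hmρ⟩
        · exfalso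
          have := (hpar (x : V) x.2 hxρ).2.2
          rw [← h2] at this
          exact absurd (hmax x hx) (by omega)
      have hbpf := (hpfmax b hb_supp hadj).1
      have hdpf := (hpfmax d hd_supp hd).1
      have hbd : b = d := Subtype.ext (hbpf.trans hdpf.symm)
      -- the first and last edges coincide, contradicting trail-ness
      have hedges : (SimpleGraph.Walk.cons hadj q).edges = s(m, b) :: q.edges := rfl
      have hlast : s(m, d) ∈ q.edges := by
        have : s(m, d) ∈ q.reverse.edges := by rw [hq']; simp
        rw [SimpleGraph.Walk.edges_reverse, List.mem_reverse] at this
        exact this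
      have hnodup := hc'.edges_nodup
      rw [hedges] at hnodup
      rw [List.nodup_cons] at hnodup
      exact hnodup.1 (hbd ▸ hlast)


lemma goodState_init {G : SimpleGraph V} {B : Set V} : GoodState G B B id := by
  refine ⟨fun v hv => hv, fun v hv => ⟨hv, rfl⟩, fun w₁ w₂ _ _ _ x₁ _ x₂ _ _ _ h => h, ?_⟩
  intro c
  by_cases hc : c ∈ B
  · right
    refine ⟨c, id, fun _ => 0, ⟨hc, rfl⟩, ?_, ?_⟩
    · intro v hv hvρ; exact absurd hv.2 hvρ
    · intro a ha b hb hab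
      exact absurd (ha.2.trans hb.2.symm) hab.ne
  · left
    ext v
    simp only [Set.mem_setOf_eq, Set.mem_empty_iff_false, iff_false, id]
    rintro ⟨hvB, rfl⟩
    exact hc hvB

lemma goodState_run {G : SimpleGraph V} {B : Set V} :
    ∀ (L : List (V × V)) (S : Set V) (r : V → V),
      GoodState G B S r → PSDValid G S L →
      GoodState G B (applyForces S L) (L.foldl updRoot r) := by
  intro L
  induction L with
  | nil => intro S r hgs _; exact hgs
  | cons p L ih =>
    intro S r hgs hv
    exact ih (insert p.2 S) (updRoot r p) (goodState_step hgs hv.1) hv.2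

/-- For every finite simple graph, the tree cover number is at most
the positive zero forcing number: `T(G) ≤ Z₊(G)`. -/
theorem tcNum_le_psdNum {V : Type*} [Fintype V] (G : SimpleGraph V) :
    tcNum G ≤ psdNum G := by
  classical
  refine le_csInf ⟨(Set.univ : Set V).ncard, Set.univ, rfl, [], trivial, rfl⟩ ?_
  rintro n ⟨B, rfl, L, hval, hfull⟩
  have hgs := goodState_run (G := G) (B := B) L B id goodState_init hval
  rw [hfull] at hgs
  obtain ⟨hB, hR, hJ, hT⟩ := hgs
  set rf := L.foldl updRoot (id : V → V) with hrf
  set 𝒯 : Finset (Set V) :=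
    (Finset.univ.image rf).image (fun c => {v | v ∈ (Set.univ : Set V) ∧ rf v = c}) with h𝒯
  have hcover : IsTreeCover G 𝒯 := by
    refine ⟨?_, ?_, ?_⟩
    · intro F hF
      obtain ⟨c, hc, rfl⟩ := Finset.mem_image.mp hF
      obtain ⟨v, _, rfl⟩ := Finset.mem_image.mp hc
      have hcc : rf (rf v) = rf v := (hR v (Set.mem_univ v)).2
      have hne : {x | x ∈ (Set.univ : Set V) ∧ rf x = rf v} ≠ ∅ := by
        intro h
        have : rf v ∈ {x | x ∈ (Set.univ : Set V) ∧ rf x = rf v} := ⟨Set.mem_univ _, hcc⟩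
        rw [h] at this
        exact this
      exact treeStruct_isTree ((hT (rf v)).resolve_left hne)
    · intro S hS T hT' hne
      obtain ⟨c₁, _, rfl⟩ := Finset.mem_image.mp hS
      obtain ⟨c₂, _, rfl⟩ := Finset.mem_image.mp hT'
      have hcc : c₁ ≠ c₂ := fun h => hne (h ▸ rfl)
      rw [Set.disjoint_left]
      rintro a ⟨_, h1⟩ ⟨_, h2⟩
      exact hcc (h1.symm.trans h2)
    · intro v
      exact ⟨_, Finset.mem_image.mpr ⟨rf v, Finset.mem_image.mpr ⟨v, Finset.mem_univ v, rfl⟩, rfl⟩,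
        ⟨Set.mem_univ v, rfl⟩⟩
  have h1 : tcNum G ≤ 𝒯.card := Nat.sInf_le ⟨𝒯, rfl, hcover⟩
  have h2 : 𝒯.card ≤ B.ncard := by
    calc 𝒯.card ≤ (Finset.univ.image rf).card := Finset.card_image_le
      _ ≤ (B.toFinite.toFinset).card := by
          refine Finset.card_le_card ?_
          intro x hx
          obtain ⟨v, _, rfl⟩ := Finset.mem_image.mp hx
          exact (B.toFinite.mem_toFinset).mpr (hB v (Set.mem_univ v))
      _ = B.ncard := (Set.ncard_eq_toFinset_card B B.toFinite).symm
  exact le_trans h1 h2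
end

section
/- If G is a cycle of cliques C_1, C_2, …, C_k with k ≥ 3, then G has a zero forcing set of size |V(G)| − (k − 2) admitting a zero forcing process in which all forces form a single forcing chain (i.e., exactly one non-trivial forcing tree, which is a path). -/
/-! Basic definitions for zero forcing and positive (semidefinite) zero forcing. -/

variable {V : Type*}

/-- `G` is a cycle of cliques `C 1, C 2, …, C k` (indexed cyclically by `ZMod k`):
the `C i` are distinct maximal cliques covering all edges of `G`, and two distinct
cliques intersect exactly when they are cyclically consecutive. -/
def IsCycleOfCliques (G : SimpleGraph V) (k : ℕ) (C : ZMod k → Set V) : Prop :=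
  Function.Injective C ∧
    (∀ i, IsMaxClique G (C i)) ∧
    (∀ u v, G.Adj u v → ∃ i, u ∈ C i ∧ v ∈ C i) ∧
    ∀ i j : ZMod k, i ≠ j → ((C i ∩ C j).Nonempty ↔ (j = i + 1 ∨ i = j + 1))


/-- Auxiliary: unfolding `ZFValid` on a cons. -/
theorem zfValid_cons {V : Type*} (G : SimpleGraph V) (S : Set V) (p : V × V)
    (L : List (V × V)) :
    ZFValid G S (p :: L) ↔ ZFForce G S p.1 p.2 ∧ ZFValid G (insert p.2 S) L :=
  Iff.rfl

/-- Auxiliary: `applyForces` adds exactly the second components. -/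
theorem applyForces_eq_union {V : Type*} (S : Set V) (L : List (V × V)) :
    applyForces S L = S ∪ {v | ∃ p ∈ L, p.2 = v} := by
  induction L generalizing S with
  | nil => simp [applyForces]
  | cons p L ih =>
    have h1 : applyForces S (p :: L) = applyForces (insert p.2 S) L := rfl
    rw [h1, ih]
    ext x
    simp only [Set.mem_union, Set.mem_insert_iff, Set.mem_setOf_eq, List.mem_cons]
    constructor
    · rintro ((rfl | hx) | ⟨q, hq, rfl⟩)
      · exact Or.inr ⟨p, Or.inl rfl, rfl⟩
      · exact Or.inl hx
      · exact Or.inr ⟨q, Or.inr hq, rfl⟩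
    · rintro (hx | ⟨q, (rfl | hq), rfl⟩)
      · exact Or.inl (Or.inr hx)
      · exact Or.inl (Or.inl rfl)
      · exact Or.inr ⟨q, hq, rfl⟩

/-- If `G` is a cycle of cliques `C 1, …, C k` with `k ≥ 3`, then
`G` has a zero forcing set of size `|V(G)| − (k − 2)` admitting a zero forcing process
in which all forces form a single forcing chain (consecutive forces are chained and
exactly one initial black vertex performs a force, so there is exactly one non-trivial
forcing tree, which is a path). -/
theorem cycleOfCliques_zf_single_chain {V : Type*} [Fintype V] (G : SimpleGraph V)
    (k : ℕ) (hk : 3 ≤ k) (C : ZMod k → Set V) (hC : IsCycleOfCliques G k C) :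
    ∃ (B : Set V) (L : List (V × V)), B.ncard = Fintype.card V - (k - 2) ∧
      ZFValid G B L ∧ applyForces B L = Set.univ ∧
      List.Chain' (fun p q => p.2 = q.1) L ∧
      (∃! b, b ∈ B ∧ ∃ w, (b, w) ∈ L) := by
  classical
  obtain ⟨hinj, hmax, hcov, hint⟩ := hC
  haveI : NeZero k := ⟨by omega⟩
  -- cast equality characterisation
  have hEq : ∀ a b : ℕ, a ≤ k → b ≤ k →
      (((a : ZMod k) = (b : ZMod k)) ↔ (a = b ∨ (a = k ∧ b = 0) ∨ (a = 0 ∧ b = k))) := by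
    intro a b ha hb
    constructor
    · intro h
      rcases eq_or_lt_of_le ha with rfl | ha' <;> rcases eq_or_lt_of_le hb with rfl | hb'
      · exact Or.inl rfl
      · rw [ZMod.natCast_self] at h
        have hb0 : b = 0 := by
          have := congrArg ZMod.val h
          rw [ZMod.val_zero, ZMod.val_cast_of_lt hb'] at this
          omega
        exact Or.inr (Or.inl ⟨rfl, hb0⟩)
      · rw [ZMod.natCast_self] at h
        have ha0 : a = 0 := by
          have := congrArg ZMod.val h.symm
          rw [ZMod.val_zero, ZMod.val_cast_of_lt ha'] at this
          omega
        exact Or.inr (Or.inr ⟨ha0, rfl⟩)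
      · have := congrArg ZMod.val h
        rw [ZMod.val_cast_of_lt ha', ZMod.val_cast_of_lt hb'] at this
        exact Or.inl this
    · rintro (rfl | ⟨rfl, rfl⟩ | ⟨rfl, rfl⟩) <;> simp [ZMod.natCast_self]
  -- consecutive intersections are nonempty
  have hne : ∀ i : ZMod k, (C i ∩ C (i + 1)).Nonempty := by
    intro i
    have hii : i ≠ i + 1 := by
      intro h
      have h1 : (1 : ZMod k) = 0 := (left_eq_add (a := i) (b := (1 : ZMod k))).mp h
      have h2 : ((1 : ℕ) : ZMod k) = ((0 : ℕ) : ZMod k) := by push_cast; exact h1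
      have := (hEq 1 0 (by omega) (by omega)).mp h2
      omega
    exact (hint i (i + 1) hii).mpr (Or.inl rfl)
  choose w hw using hne
  set ww : ℕ → V := fun n => w (n : ZMod k) with hww_def
  have hwC : ∀ i : ℕ, ww i ∈ C ((i : ℕ) : ZMod k) ∧ ww i ∈ C (((i + 1 : ℕ)) : ZMod k) := by
    intro i
    have h := hw ((i : ℕ) : ZMod k)
    have hcast : ((i : ZMod k) + 1) = (((i + 1 : ℕ)) : ZMod k) := by push_cast; ring
    exact ⟨h.1, by rw [← hcast]; exact h.2⟩
  -- membership in two cliques constrains indices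
  have hmemN : ∀ (v : V) (a b : ℕ), a ≤ k - 1 → b ≤ k - 1 → v ∈ C ((a : ℕ) : ZMod k) →
      v ∈ C ((b : ℕ) : ZMod k) →
      a = b ∨ b = a + 1 ∨ a = b + 1 ∨ (a = k - 1 ∧ b = 0) ∨ (b = k - 1 ∧ a = 0) := by
    intro v a b ha hb hva hvb
    by_cases hab : ((a : ℕ) : ZMod k) = ((b : ℕ) : ZMod k)
    · have := (hEq a b (by omega) (by omega)).mp hab
      omega
    · have h := (hint _ _ hab).mp ⟨v, hva, hvb⟩
      rcases h with h | h
      · rw [show ((a : ZMod k) + 1) = (((a + 1 : ℕ)) : ZMod k) by push_cast; ring] at h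
        have := (hEq b (a + 1) (by omega) (by omega)).mp h
        omega
      · rw [show ((b : ZMod k) + 1) = (((b + 1 : ℕ)) : ZMod k) by push_cast; ring] at h
        have := (hEq a (b + 1) (by omega) (by omega)).mp h
        omega
  rcases Nat.lt_or_ge k 4 with hk4 | hk4
  · -- k = 3
    have hk3 : k = 3 := by omega
    subst hk3
    -- find a black forcer u ∈ C 1 with u ≠ ww 1
    have hu : ∃ u, u ∈ C (((1 : ℕ)) : ZMod 3) ∧ u ≠ ww 1 := by
      by_cases h01 : ww 0 = ww 1
      · by_contra hcon
        push_neg at hcon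
        have hsub : C (((1 : ℕ)) : ZMod 3) ⊆ C (((2 : ℕ)) : ZMod 3) := by
          intro x hx
          have hx1 : x = ww 1 := hcon x hx
          rw [hx1]
          exact (hwC 1).2
        have heq := (hmax (((1 : ℕ)) : ZMod 3)).2 _ ((hmax (((2 : ℕ)) : ZMod 3)).1) hsub
        have h12 := hinj heq
        have := (hEq 1 2 (by omega) (by omega)).mp h12
        omega
      · exact ⟨ww 0, (hwC 0).2, h01⟩
    obtain ⟨u, huC, hune⟩ := hu
    have hadj : G.Adj u (ww 1) := (hmax _).1 huC (hwC 1).1 hune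
    refine ⟨{ww 1}ᶜ, [(u, ww 1)], ?_, ?_, ?_, ?_, ?_⟩
    · have h1 : ({ww 1} : Set V).ncard + ({ww 1} : Set V)ᶜ.ncard = Nat.card V :=
        Set.ncard_add_ncard_compl _
      rw [Set.ncard_singleton, Nat.card_eq_fintype_card] at h1
      have hpos : 0 < Fintype.card V := Fintype.card_pos_iff.mpr ⟨ww 1⟩
      omega
    · refine ⟨⟨fun h => hune (by simpa using h), by simp, hadj, ?_⟩, trivial⟩
      intro x _ hx
      simpa using hx
    · have h1 : applyForces ({ww 1}ᶜ : Set V) [(u, ww 1)] = insert (ww 1) ({ww 1}ᶜ) := rfl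
      rw [h1]
      ext x
      simp only [Set.mem_insert_iff, Set.mem_compl_iff, Set.mem_singleton_iff,
        Set.mem_univ, iff_true]
      tauto
    · exact List.IsChain.singleton _
    · refine ⟨u, ⟨fun h => hune (by simpa using h), ⟨ww 1, by simp⟩⟩, ?_⟩
      rintro b ⟨-, w', hw'⟩
      simp only [List.mem_singleton, Prod.mk.injEq] at hw'
      exact hw'.1
  · -- k ≥ 4
    have hwinj : ∀ i j : ℕ, i ≤ k - 2 → j ≤ k - 2 → ww i = ww j → i = j := by
      intro i j hi hj hwij
      have c1 := (hwC i).1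
      have c2 := (hwC i).2
      rw [hwij] at c1 c2
      have h1 := hmemN (ww j) i j (by omega) (by omega) c1 (hwC j).1
      have h2 := hmemN (ww j) i (j + 1) (by omega) (by omega) c1 (hwC j).2
      have h3 := hmemN (ww j) (i + 1) j (by omega) (by omega) c2 (hwC j).1
      omega
    have hnadj : ∀ i j : ℕ, i ≤ k - 2 → j ≤ k - 2 → G.Adj (ww i) (ww j) →
        i = j ∨ j = i + 1 ∨ i = j + 1 := by
      intro i j hi hj hadj
      obtain ⟨m, hmi, hmj⟩ := hcov _ _ hadj
      have hmv : ((m.val : ℕ) : ZMod k) = m := ZMod.natCast_rightInverse m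
      have hamax : m.val ≤ k - 1 := by have := ZMod.val_lt m; omega
      rw [← hmv] at hmi hmj
      have h1 := hmemN (ww i) i m.val (by omega) hamax (hwC i).1 hmi
      have h2 := hmemN (ww i) (i + 1) m.val (by omega) hamax (hwC i).2 hmi
      have h3 := hmemN (ww j) j m.val (by omega) hamax (hwC j).1 hmj
      have h4 := hmemN (ww j) (j + 1) m.val (by omega) hamax (hwC j).2 hmj
      omega
    have hadjw : ∀ t : ℕ, t + 1 ≤ k - 2 → G.Adj (ww t) (ww (t + 1)) := by
      intro t ht
      have hne' : ww t ≠ ww (t + 1) := fun h => by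
        have := hwinj t (t + 1) (by omega) (by omega) h; omega
      exact (hmax (((t + 1 : ℕ)) : ZMod k)).1 (hwC t).2 (hwC (t + 1)).1 hne'
    -- the key set identity
    have hins : ∀ t : ℕ, insert (ww (t + 1)) ((ww '' Set.Icc (t + 1) (k - 2))ᶜ) =
        (ww '' Set.Icc (t + 2) (k - 2))ᶜ := by
      intro t
      ext x
      simp only [Set.mem_insert_iff, Set.mem_compl_iff, Set.mem_image, Set.mem_Icc,
        not_exists, not_and]
      constructor
      · rintro (rfl | hx)
        · rintro j ⟨hj1, hj2⟩ hj3
          have := hwinj j (t + 1) hj2 (by omega) hj3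
          omega
        · rintro j ⟨hj1, hj2⟩ hj3
          exact hx j ⟨by omega, hj2⟩ hj3
      · intro hx
        by_cases hxw : x = ww (t + 1)
        · exact Or.inl hxw
        · refine Or.inr ?_
          rintro j ⟨hj1, hj2⟩ rfl
          rcases Nat.eq_or_lt_of_le hj1 with h | h
          · exact hxw (by rw [← h])
          · exact hx j ⟨by omega, hj2⟩ rfl
    -- the validity induction
    have valid : ∀ r t : ℕ, t + r = k - 2 →
        ZFValid G ((ww '' Set.Icc (t + 1) (k - 2))ᶜ)
          ((List.range r).map fun s => (ww (t + s), ww (t + s + 1))) := by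
      intro r
      induction r with
      | zero => intro t ht; exact trivial
      | succ r ih =>
        intro t ht
        rw [List.range_succ_eq_map, List.map_cons, List.map_map]
        rw [zfValid_cons]
        constructor
        · refine ⟨?_, ?_, ?_, ?_⟩
          · intro hmem
            simp only [Set.mem_compl_iff, not_not] at hmem
            obtain ⟨j, hj, hj3⟩ := hmem
            simp only [Set.mem_Icc] at hj
            have := hwinj j (t + 0) hj.2 (by omega) hj3
            omega
          · simp only [Set.mem_compl_iff, not_not]
            exact ⟨t + 0 + 1, by simp only [Set.mem_Icc]; omega, rfl⟩
          · exact hadjw (t + 0) (by omega)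
          · intro x hxadj hx
            simp only [Set.mem_compl_iff, not_not] at hx
            obtain ⟨j, hj, rfl⟩ := hx
            simp only [Set.mem_Icc] at hj
            have hj' := hnadj (t + 0) j (by omega) hj.2 hxadj
            have hjt : j = t + 0 + 1 := by omega
            rw [hjt]
        · have hfun : ((fun s => (ww (t + s), ww (t + s + 1))) ∘ Nat.succ) =
              (fun s => (ww ((t + 1) + s), ww ((t + 1) + s + 1))) := by
            funext s
            simp only [Function.comp_apply, Nat.succ_eq_add_one]
            have h1 : t + (s + 1) = (t + 1) + s := by omega
            rw [h1]
          rw [hfun]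
          have h0 : (ww (t + 0), ww (t + 0 + 1)).2 = ww (t + 1) := rfl
          rw [h0, hins t]
          exact ih (t + 1) (by omega)
    -- assemble
    set B : Set V := (ww '' Set.Icc 1 (k - 2))ᶜ with hB
    set L : List (V × V) := (List.range (k - 2)).map (fun s => (ww s, ww (s + 1))) with hL
    have hLvalid : ZFValid G B L := by
      have h := valid (k - 2) 0 (by omega)
      have hfun : (fun s => (ww (0 + s), ww (0 + s + 1))) = fun s => (ww s, ww (s + 1)) := by
        funext s; rw [Nat.zero_add]
      rw [hfun] at h
      exact h
    refine ⟨B, L, ?_, hLvalid, ?_, ?_, ?_⟩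
    · -- cardinality
      have hWcard : (ww '' Set.Icc 1 (k - 2)).ncard = k - 2 := by
        rw [Set.ncard_image_of_injOn]
        · rw [← Finset.coe_Icc, Set.ncard_coe_finset, Nat.card_Icc]
          omega
        · intro i hi j hj hij
          simp only [Set.mem_Icc] at hi hj
          exact hwinj i j hi.2 hj.2 hij
      have h1 : (ww '' Set.Icc 1 (k - 2)).ncard + B.ncard = Nat.card V :=
        Set.ncard_add_ncard_compl _
      rw [hWcard, Nat.card_eq_fintype_card] at h1
      omega
    · -- applyForces = univ
      rw [applyForces_eq_union]
      ext v
      simp only [Set.mem_union, Set.mem_univ, iff_true]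
      by_cases hv : v ∈ B
      · exact Or.inl hv
      · right
        rw [hB, Set.mem_compl_iff, not_not] at hv
        obtain ⟨j, hj, rfl⟩ := hv
        simp only [Set.mem_Icc] at hj
        refine ⟨(ww (j - 1), ww ((j - 1) + 1)), ?_, ?_⟩
        · rw [hL]
          exact List.mem_map.mpr ⟨j - 1, List.mem_range.mpr (by omega), rfl⟩
        · show ww ((j - 1) + 1) = ww j
          congr 1
          omega
    · -- chain
      rw [hL]; show List.IsChain _ _; rw [List.isChain_map]
      have hks : k - 2 = (k - 3) + 1 := by omega
      rw [hks, List.isChain_range_succ]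
      intro i _
      rfl
    · -- unique forcer
      refine ⟨ww 0, ⟨?_, ⟨ww 1, ?_⟩⟩, ?_⟩
      · rw [hB, Set.mem_compl_iff]
        intro hmem
        obtain ⟨j, hj, hj3⟩ := hmem
        simp only [Set.mem_Icc] at hj
        have := hwinj j 0 hj.2 (by omega) hj3
        omega
      · rw [hL]
        exact List.mem_map.mpr ⟨0, List.mem_range.mpr (by omega), rfl⟩
      · rintro b ⟨hbB, w', hw'⟩
        rw [hL] at hw'
        obtain ⟨t, ht, hteq⟩ := List.mem_map.mp hw'
        rw [List.mem_range] at ht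
        have hbt : b = ww t := by
          have := congrArg Prod.fst hteq
          simpa using this.symm
        rcases Nat.eq_zero_or_pos t with rfl | htpos
        · rw [hbt]
        · exfalso
          rw [hB, Set.mem_compl_iff] at hbB
          exact hbB ⟨t, by simp only [Set.mem_Icc]; omega, hbt.symm⟩
end

section
/- Let G be a cycle of cliques C_1, C_2, …, C_k with k ≥ 3, and suppose there is a vertex x ∈ V(C_1) contained in no other clique C_i (i ≠ 1) and a vertex y ∈ V(C_k) contained in no other clique C_i (i ≠ k). Then Z_+(G) = |V(G)| − k, and there is an optimal positive zero forcing set of size |V(G)| − k admitting a positive zero forcing process with exactly one non-trivial forcing tree. -/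
/-! Basic definitions for zero forcing and positive (semidefinite) zero forcing. -/

variable {V : Type*}

/-! ### Auxiliary lemmas -/

lemma psdValid_basic {G : SimpleGraph V} :
    ∀ {L : List (V × V)} {S : Set V}, PSDValid G S L →
      (L.map Prod.snd).Nodup ∧ (∀ p ∈ L, p.2 ∉ S) ∧ (∀ p ∈ L, G.Adj p.1 p.2) := by
  intro L
  induction L with
  | nil => intro S _; simp
  | cons p L ih =>
    intro S h
    obtain ⟨hf, hv⟩ := h
    obtain ⟨h1, h2, h3⟩ := ih hv
    refine ⟨?_, ?_, ?_⟩
    · simp only [List.map_cons, List.nodup_cons]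
      exact ⟨fun hmem => by
        obtain ⟨q, hq, hq2⟩ := List.mem_map.1 hmem
        exact h2 q hq (by simp [hq2]), h1⟩
    · intro q hq
      rcases List.mem_cons.1 hq with rfl | hq'
      · exact hf.2.1
      · exact fun hqS => h2 q hq' (Set.mem_insert_of_mem _ hqS)
    · intro q hq
      rcases List.mem_cons.1 hq with rfl | hq'
      · exact hf.2.2.1
      · exact h3 q hq'

lemma applyForces_eq (S : Set V) :
    ∀ L : List (V × V), applyForces S L = S ∪ {v | ∃ p ∈ L, p.2 = v} := by
  intro L
  induction L generalizing S with
  | nil => simp [applyForces]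
  | cons p L ih =>
    show applyForces (insert p.2 S) L = _
    rw [ih]
    ext v
    simp [Set.mem_insert_iff]
    tauto

lemma psdValid_clique_unique {G : SimpleGraph V} {ι : Type*} {C : ι → Set V}
    (hcl : ∀ i, G.IsClique (C i)) :
    ∀ {L : List (V × V)} {S : Set V}, PSDValid G S L →
      ∀ (i : ι), ∀ p ∈ L, ∀ r ∈ L,
        p.1 ∈ C i → p.2 ∈ C i → r.1 ∈ C i → r.2 ∈ C i → p.2 = r.2 := by
  intro L
  induction L with
  | nil => intro S _ i p hp; simp at hp
  | cons a L ih =>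
    intro S h i p hp r hr hp1 hp2 hr1 hr2
    obtain ⟨hf, hv⟩ := h
    obtain ⟨_, hnotin, _⟩ := psdValid_basic hv
    have key : ∀ q ∈ L, q.1 ∈ C i → q.2 ∈ C i → a.1 ∈ C i → a.2 ∈ C i → False := by
      intro q hq hq1 hq2 ha1 ha2
      have hq2S : q.2 ∉ insert a.2 S := hnotin q hq
      have hq2ne : q.2 ≠ a.2 := fun h => hq2S (h ▸ Set.mem_insert _ _)
      have hq2nS : q.2 ∉ S := fun h => hq2S (Set.mem_insert_of_mem _ h)
      have hadj1 : G.Adj a.1 q.2 := hcl i ha1 hq2 (fun h => hq2nS (h ▸ hf.1))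
      have hadj2 : G.Adj q.2 a.2 := hcl i hq2 ha2 hq2ne
      have hconn : ConnOutside G S q.2 a.2 :=
        Relation.ReflTransGen.single ⟨hq2nS, hf.2.1, hadj2⟩
      exact hq2ne (hf.2.2.2 q.2 hadj1 hq2nS hconn)
    rcases List.mem_cons.1 hp with rfl | hp' <;> rcases List.mem_cons.1 hr with rfl | hr'
    · rfl
    · exact absurd (key r hr' hr1 hr2 hp1 hp2) id
    · exact absurd (key p hp' hp1 hp2 hr1 hr2) id
    · exact ih hv i p hp' r hr' hp1 hp2 hr1 hr2

lemma psd_length_le {k : ℕ} (hk : 0 < k) {G : SimpleGraph V} {C : ZMod k → Set V}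
    (hcl : ∀ i, G.IsClique (C i))
    (hcover : ∀ u v, G.Adj u v → ∃ i, u ∈ C i ∧ v ∈ C i)
    {B : Set V} {L : List (V × V)} (h : PSDValid G B L) : L.length ≤ k := by
  haveI : NeZero k := ⟨hk.ne'⟩
  classical
  obtain ⟨hnd, _, hadj⟩ := psdValid_basic h
  have hLnd : L.Nodup := hnd.of_map
  have hsndinj : ∀ p ∈ L, ∀ r ∈ L, p.2 = r.2 → p = r :=
    fun p hp r hr hpr => List.inj_on_of_nodup_map hnd hp hr hpr
  set f : V × V → ZMod k := fun p =>
    if hx : G.Adj p.1 p.2 then Classical.choose (hcover p.1 p.2 hx) else 0 with hf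
  have hfspec : ∀ p ∈ L, p.1 ∈ C (f p) ∧ p.2 ∈ C (f p) := by
    intro p hp
    have ha := hadj p hp
    simp only [hf, dif_pos ha]
    exact Classical.choose_spec (hcover p.1 p.2 ha)
  have hinj : Set.InjOn f L.toFinset := by
    intro p hp r hr hpr
    simp only [Finset.mem_coe, List.mem_toFinset] at hp hr
    obtain ⟨hp1, hp2⟩ := hfspec p hp
    obtain ⟨hr1, hr2⟩ := hfspec r hr
    rw [hpr] at hp1 hp2
    exact hsndinj p hp r hr (psdValid_clique_unique hcl h (f r) p hp r hr hp1 hp2 hr1 hr2)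
  calc L.length = L.toFinset.card := (List.toFinset_card_of_nodup hLnd).symm
    _ ≤ (Finset.univ : Finset (ZMod k)).card :=
        Finset.card_le_card_of_injOn f (fun _ _ => Finset.mem_univ _) hinj
    _ = k := by rw [Finset.card_univ, ZMod.card]


lemma psd_lower {V : Type*} [Fintype V] {G : SimpleGraph V} {k : ℕ} (hk : 0 < k)
    {C : ZMod k → Set V} (hcl : ∀ i, G.IsClique (C i))
    (hcover : ∀ u v, G.Adj u v → ∃ i, u ∈ C i ∧ v ∈ C i)
    {B : Set V} {L : List (V × V)} (hL : PSDValid G B L)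
    (huniv : applyForces B L = Set.univ) :
    Fintype.card V ≤ B.ncard + k := by
  classical
  have hlen := psd_length_le hk hcl hcover hL
  have hT : {v | ∃ p ∈ L, p.2 = v} = ↑((L.map Prod.snd).toFinset) := by
    ext v; simp [List.mem_map]
  have h1 : (Set.univ : Set V) = B ∪ ↑((L.map Prod.snd).toFinset) := by
    rw [← hT, ← applyForces_eq, huniv]
  have h2 : (Set.univ : Set V).ncard ≤ B.ncard + ((L.map Prod.snd).toFinset : Set V).ncard := by
    rw [h1]; exact Set.ncard_union_le _ _
  have h3 : ((L.map Prod.snd).toFinset : Set V).ncard ≤ k := by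
    rw [Set.ncard_coe_finset]
    calc (L.map Prod.snd).toFinset.card ≤ (L.map Prod.snd).length := (L.map Prod.snd).toFinset_card_le
      _ = L.length := List.length_map _
      _ ≤ k := hlen
  have := Set.ncard_univ V
  rw [Set.ncard_univ, Nat.card_eq_fintype_card] at h2
  omega

section Casts
variable {k : ℕ}

lemma castEqK (hk : 0 < k) {a b : ℕ} (ha : a ≤ k) (hb : b ≤ k)
    (h : (a : ZMod k) = (b : ZMod k)) : a = b ∨ (a = 0 ∧ b = k) ∨ (a = k ∧ b = 0) := by
  have h' : a % k = b % k := (ZMod.natCast_eq_natCast_iff' a b k).1 h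
  rcases Nat.lt_or_ge a k with h1 | h1 <;> rcases Nat.lt_or_ge b k with h2 | h2
  · rw [Nat.mod_eq_of_lt h1, Nat.mod_eq_of_lt h2] at h'; omega
  · have hb' : b = k := le_antisymm hb h2
    rw [Nat.mod_eq_of_lt h1, hb', Nat.mod_self] at h'; omega
  · have ha' : a = k := le_antisymm ha h1
    rw [Nat.mod_eq_of_lt h2, ha', Nat.mod_self] at h'; omega
  · have ha' : a = k := le_antisymm ha h1
    have hb' : b = k := le_antisymm hb h2
    omega

lemma negCastK {j : ℕ} (hj : j ≤ k) : (-(j : ZMod k)) = ((k - j : ℕ) : ZMod k) := by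
  rw [Nat.cast_sub hj, ZMod.natCast_self, zero_sub]

lemma oneSubCastK {j : ℕ} (hj : j ≤ k) :
    (1 : ZMod k) - (j : ZMod k) = ((k + 1 - j : ℕ) : ZMod k) := by
  rw [Nat.cast_sub (by omega), Nat.cast_add, ZMod.natCast_self, Nat.cast_one, zero_add]

lemma E1 (hk : 4 ≤ k) {s t : ℕ} (hs1 : 1 ≤ s) (hs2 : s ≤ k) (ht1 : 1 ≤ t) (ht2 : t ≤ k)
    (h : -(s : ZMod k) = -(t : ZMod k)) : s = t := by
  have h' : ((k - s : ℕ) : ZMod k) = ((k - t : ℕ) : ZMod k) := by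
    rw [← negCastK hs2, ← negCastK ht2]; exact h
  have := castEqK (by omega) (by omega) (by omega) h'
  omega

lemma E2 (hk : 4 ≤ k) {s t : ℕ} (hs1 : 1 ≤ s) (hs2 : s ≤ k) (ht1 : 1 ≤ t) (ht2 : t ≤ k)
    (h : -(s : ZMod k) = 1 - (t : ZMod k)) : t = s + 1 ∨ (s = k ∧ t = 1) := by
  have h' : ((k - s : ℕ) : ZMod k) = ((k + 1 - t : ℕ) : ZMod k) := by
    rw [← negCastK hs2, ← oneSubCastK ht2]; exact h
  have := castEqK (by omega) (by omega) (by omega) h'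
  omega

lemma E3 (hk : 4 ≤ k) {s t : ℕ} (hs1 : 1 ≤ s) (hs2 : s ≤ k) (ht1 : 1 ≤ t) (ht2 : t ≤ k)
    (h : (1 : ZMod k) - (s : ZMod k) = 1 - (t : ZMod k)) : s = t := by
  have h' : ((k + 1 - s : ℕ) : ZMod k) = ((k + 1 - t : ℕ) : ZMod k) := by
    rw [← oneSubCastK hs2, ← oneSubCastK ht2]; exact h
  have := castEqK (by omega) (by omega) (by omega) h'
  omega

lemma E4 (hk : 4 ≤ k) {s : ℕ} (hs1 : 1 ≤ s) (hs2 : s ≤ k)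
    (h : -(s : ZMod k) = 0) : s = k := by
  have h' : ((k - s : ℕ) : ZMod k) = ((0 : ℕ) : ZMod k) := by
    rw [← negCastK hs2]; simpa using h
  have := castEqK (by omega) (by omega) (by omega) h'
  omega

lemma E5 (hk : 4 ≤ k) {s : ℕ} (hs1 : 1 ≤ s) (hs2 : s ≤ k)
    (h : (1 : ZMod k) - (s : ZMod k) = 0) : s = 1 := by
  have h' : ((k + 1 - s : ℕ) : ZMod k) = ((0 : ℕ) : ZMod k) := by
    rw [← oneSubCastK hs2]; simpa using h
  have := castEqK (by omega) (by omega) (by omega) h'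
  omega

lemma E6 (hk : 4 ≤ k) {s : ℕ} (hs1 : 1 ≤ s) (hs2 : s ≤ k)
    (h : -(s : ZMod k) = 1) : s = k - 1 := by
  have h' : ((k - s : ℕ) : ZMod k) = ((1 : ℕ) : ZMod k) := by
    rw [← negCastK hs2]; simpa using h
  have := castEqK (by omega) (by omega) (by omega) h'
  omega

lemma E7 (hk : 4 ≤ k) {s : ℕ} (hs1 : 1 ≤ s) (hs2 : s ≤ k)
    (h : (1 : ZMod k) - (s : ZMod k) = 1) : s = k := by
  have h' : ((k + 1 - s : ℕ) : ZMod k) = ((1 : ℕ) : ZMod k) := by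
    rw [← oneSubCastK hs2]; simpa using h
  have := castEqK (by omega) (by omega) (by omega) h'
  omega

end Casts

lemma construct_ge4 {V : Type*} [Fintype V] {G : SimpleGraph V} {k : ℕ} (hk : 4 ≤ k)
    {C : ZMod k → Set V}
    (hcl : ∀ i, G.IsClique (C i))
    (hcover : ∀ u v, G.Adj u v → ∃ i, u ∈ C i ∧ v ∈ C i)
    (hcons : ∀ i j : ZMod k, i ≠ j → ((C i ∩ C j).Nonempty ↔ (j = i + 1 ∨ i = j + 1)))
    (x y : V) (hx : x ∈ C 1) (hx' : ∀ i, i ≠ 1 → x ∉ C i)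
    (hy : y ∈ C 0) (hy' : ∀ i, i ≠ 0 → y ∉ C i) :
    ∃ (B : Set V) (L : List (V × V)), B.ncard = Fintype.card V - k ∧
      PSDValid G B L ∧ applyForces B L = Set.univ ∧
      (∃! b, b ∈ B ∧ ∃ w, (b, w) ∈ L) := by
  classical
  have hk0 : k ≠ 0 := by omega
  have hne1 : (1 : ZMod k) ≠ 0 := by
    intro h
    have h' : ((1 : ℕ) : ZMod k) = ((0 : ℕ) : ZMod k) := by simpa using h
    have := castEqK (by omega) (by omega) (by omega) h'; omega
  have hne3 : (3 : ZMod k) ≠ 0 := by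
    intro h
    have h' : ((3 : ℕ) : ZMod k) = ((0 : ℕ) : ZMod k) := by push_cast; simpa using h
    have := castEqK (by omega) (by omega) (by omega) h'; omega
  have hyC : ∀ m, y ∈ C m → m = 0 := fun m hm => by
    by_contra hne; exact hy' m hne hm
  have hxC : ∀ m, x ∈ C m → m = 1 := fun m hm => by
    by_contra hne; exact hx' m hne hm
  have hEnon : ∀ i : ZMod k, (C i ∩ C (i + 1)).Nonempty := by
    intro i
    refine (hcons i (i + 1) ?_).2 (Or.inl rfl)
    intro h; exact hne1 (by linear_combination -h)
  choose e he using hEnon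
  set q : ℕ → V := fun j => if j = 0 then y else if j = k then x else e (-(j : ZMod k))
    with hqdef
  have hq0 : q 0 = y := by simp [hqdef]
  have hqk : q k = x := by simp [hqdef, hk0]
  have hqm : ∀ j, 1 ≤ j → j ≤ k - 1 → q j = e (-(j : ZMod k)) := by
    intro j h1 h2
    have e1 : j ≠ 0 := by omega
    have e2 : j ≠ k := by omega
    simp [hqdef, e1, e2]
  have hmemA : ∀ j, j ≤ k - 1 → q j ∈ C (-(j : ZMod k)) := by
    intro j hj
    rcases Nat.eq_zero_or_pos j with rfl | h1
    · rw [hq0]; simpa using hy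
    · rw [hqm j h1 hj]; exact (he _).1
  have hmemB : ∀ j, 1 ≤ j → j ≤ k → q j ∈ C (1 - (j : ZMod k)) := by
    intro j h1 h2
    rcases eq_or_ne j k with heq | hne
    · rw [heq, hqk]
      have : (1 : ZMod k) - ((k : ℕ) : ZMod k) = 1 := by rw [ZMod.natCast_self, sub_zero]
      rw [this]; exact hx
    · rw [hqm j h1 (by omega)]
      have : (1 : ZMod k) - ((j : ℕ) : ZMod k) = -((j : ℕ) : ZMod k) + 1 := by ring
      rw [this]; exact (he _).2
  have hmidC : ∀ j, 1 ≤ j → j ≤ k - 1 → ∀ m : ZMod k, q j ∈ C m →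
      m = -(j : ZMod k) ∨ m = 1 - (j : ZMod k) := by
    intro j h1 h2 m hm
    by_cases hA : m = -((j : ℕ) : ZMod k)
    · exact Or.inl hA
    by_cases hB : m = 1 - ((j : ℕ) : ZMod k)
    · exact Or.inr hB
    exfalso
    have c1 := (hcons m _ hA).1 ⟨q j, hm, hmemA j h2⟩
    rcases c1 with h | h
    · have c2 := (hcons m _ hB).1 ⟨q j, hm, hmemB j h1 (by omega)⟩
      rcases c2 with h' | h'
      · exact hA (by linear_combination -h')
      · exact hne3 (by linear_combination -h' - h)
    · exact hB (by linear_combination h)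
  have qInj : ∀ s t, 1 ≤ s → s ≤ k → 1 ≤ t → t ≤ k → q s = q t → s = t := by
    intro s t hs1 hs2 ht1 ht2 hst
    by_contra hne
    have hxq : ∀ u, 1 ≤ u → u ≤ k - 1 → q u ≠ x := by
      intro u h1 h2 hqu
      have hmm : x ∈ C (1 - (u : ZMod k)) := by rw [← hqu]; exact hmemB u h1 (by omega)
      have h7 := E7 hk h1 (by omega) (hxC _ hmm)
      omega
    rcases eq_or_ne t k with rfl | htk
    · exact hxq s hs1 (by omega) (by rw [hst, hqk]) 
    rcases eq_or_ne s k with rfl | hsk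
    · exact hxq t ht1 (by omega) (by rw [← hst, hqk])
    · have h1 : q s ∈ C (-(t : ZMod k)) := by rw [hst]; exact hmemA t (by omega)
      have h2 : q s ∈ C (1 - (t : ZMod k)) := by rw [hst]; exact hmemB t ht1 ht2
      rcases hmidC s hs1 (by omega) _ h1 with hA | hA
      · have := E1 hk ht1 ht2 hs1 hs2 hA; omega
      · rcases hmidC s hs1 (by omega) _ h2 with hB | hB
        · have e1 := E2 hk hs1 hs2 ht1 ht2 hB.symm
          have e2 := E2 hk ht1 ht2 hs1 hs2 hA
          omega
        · have := E3 hk ht1 ht2 hs1 hs2 hB; omega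
  set W : Set V := q '' Set.Icc 1 k with hW
  have hyW : y ∉ W := by
    rintro ⟨t, ht, hqt⟩
    rw [Set.mem_Icc] at ht
    obtain ⟨ht1, ht2⟩ := ht
    rcases eq_or_ne t k with rfl | htk
    · rw [hqk] at hqt
      exact hne1 (hyC 1 (hqt ▸ hx))
    · have hmm : y ∈ C (-(t : ZMod k)) := by rw [← hqt]; exact hmemA t (by omega)
      have h4 := E4 hk ht1 ht2 (hyC _ hmm)
      omega
  have hcard : W.ncard = k := by
    have hinj : Set.InjOn q (Set.Icc 1 k) := by
      intro a ha b hb hab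
      rw [Set.mem_Icc] at ha hb
      exact qInj a b ha.1 ha.2 hb.1 hb.2 hab
    rw [hW, Set.ncard_image_of_injOn hinj, ← Finset.coe_Icc, Set.ncard_coe_finset,
      Nat.card_Icc]
    omega
  have hBcard : Wᶜ.ncard = Fintype.card V - k := by
    have := Set.ncard_add_ncard_compl W
    rw [Nat.card_eq_fintype_card] at this
    omega
  have hstep : ∀ j, j ≤ k - 1 → PSDForce G (Wᶜ ∪ q '' Set.Icc 1 j) (q j) (q (j + 1)) := by
    intro j hj
    have hwhite : ∀ v, v ∉ Wᶜ ∪ q '' Set.Icc 1 j → ∃ t, j + 1 ≤ t ∧ t ≤ k ∧ v = q t := by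
      intro v hv
      rw [Set.mem_union, not_or] at hv
      have h1 : v ∈ W := not_not.1 hv.1
      obtain ⟨t, ht, rfl⟩ := h1
      rw [Set.mem_Icc] at ht
      refine ⟨t, ?_, ht.2, rfl⟩
      by_contra hc
      exact hv.2 ⟨t, Set.mem_Icc.2 ⟨ht.1, by omega⟩, rfl⟩
    refine ⟨?_, ?_, ?_, ?_⟩
    · rcases Nat.eq_zero_or_pos j with rfl | h1
      · rw [hq0]; exact Or.inl hyW
      · exact Or.inr ⟨j, Set.mem_Icc.2 ⟨h1, le_refl j⟩, rfl⟩
    · rintro (hc | ⟨t, ht, hqt⟩)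
      · exact hc ⟨j + 1, Set.mem_Icc.2 ⟨by omega, by omega⟩, rfl⟩
      · rw [Set.mem_Icc] at ht
        have := qInj t (j + 1) ht.1 (by omega) (by omega) (by omega) hqt
        omega
    · have h1 : q j ∈ C (-(j : ZMod k)) := hmemA j hj
      have h2 : q (j + 1) ∈ C (-(j : ZMod k)) := by
        have hmm := hmemB (j + 1) (by omega) (by omega)
        have heq : (1 : ZMod k) - ((j + 1 : ℕ) : ZMod k) = -((j : ℕ) : ZMod k) := by
          push_cast; ring
        rwa [heq] at hmm
      have hne : q j ≠ q (j + 1) := by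
        rcases Nat.eq_zero_or_pos j with rfl | hj1
        · rw [hq0]; intro hcon
          exact hyW ⟨0 + 1, Set.mem_Icc.2 ⟨by omega, by omega⟩, hcon.symm⟩
        · intro hcon
          have := qInj j (j + 1) hj1 (by omega) (by omega) (by omega) hcon; omega
      exact hcl _ h1 h2 hne
    · intro v hvadj hvS _
      obtain ⟨t, ht1, ht2, rfl⟩ := hwhite v hvS
      obtain ⟨m, hm1, hm2⟩ := hcover _ _ hvadj
      have hgoal : t = j + 1 := by
        rcases Nat.eq_zero_or_pos j with rfl | hj1
        · rw [hq0] at hm1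
          have hm0 := hyC m hm1
          subst hm0
          rcases eq_or_ne t k with rfl | htk
          · rw [hqk] at hm2
            exact absurd (hxC 0 hm2).symm hne1
          · rcases hmidC t (by omega) (by omega) 0 hm2 with h | h
            · have := E4 hk (by omega) ht2 h.symm; omega
            · have := E5 hk (by omega) ht2 h.symm; omega
        · rcases hmidC j hj1 hj m hm1 with rfl | rfl
          · rcases eq_or_ne t k with rfl | htk
            · rw [hqk] at hm2
              have h6 := E6 hk hj1 (by omega) (hxC _ hm2)
              omega
            · rcases hmidC t (by omega) (by omega) _ hm2 with h | h
              · have := E1 hk hj1 (by omega) (by omega) ht2 h; omega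
              · have := E2 hk hj1 (by omega) (by omega) ht2 h; omega
          · rcases eq_or_ne t k with rfl | htk
            · rw [hqk] at hm2
              have := E7 hk hj1 (by omega) (hxC _ hm2)
              omega
            · rcases hmidC t (by omega) (by omega) _ hm2 with h | h
              · have := E2 hk (by omega) ht2 hj1 (by omega) h.symm; omega
              · have := E3 hk hj1 (by omega) (by omega) ht2 h; omega
      rw [hgoal]
  have hvalid : ∀ n j, j + n = k → PSDValid G (Wᶜ ∪ q '' Set.Icc 1 j)
      ((List.range' j n).map fun t => (q t, q (t + 1))) := by
    intro n
    induction n with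
    | zero => intro j hj; exact trivial
    | succ n ih =>
      intro j hj
      rw [List.range'_succ, List.map_cons]
      refine ⟨hstep j (by omega), ?_⟩
      have hIcc : Set.Icc 1 (j + 1) = insert (j + 1) (Set.Icc 1 j) := by
        ext a; simp only [Set.mem_Icc, Set.mem_insert_iff]; omega
      have hS : insert (q (j + 1)) (Wᶜ ∪ q '' Set.Icc 1 j) = Wᶜ ∪ q '' Set.Icc 1 (j + 1) := by
        rw [hIcc, Set.image_insert_eq]
        ext v
        simp only [Set.mem_insert_iff, Set.mem_union]
        tauto
      have hmm := ih (j + 1) (by omega)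
      rw [← hS] at hmm
      exact hmm
  refine ⟨Wᶜ, (List.range k).map (fun j => (q j, q (j + 1))), hBcard, ?_, ?_, ?_⟩
  · have hmm := hvalid k 0 (by omega)
    rw [show Set.Icc 1 0 = (∅ : Set ℕ) from Set.Icc_eq_empty (by omega)] at hmm
    simpa [List.range_eq_range'] using hmm
  · rw [applyForces_eq]
    ext v
    simp only [Set.mem_union, Set.mem_setOf_eq, Set.mem_univ, iff_true]
    by_cases hv : v ∈ W
    · right
      obtain ⟨t, ht, rfl⟩ := hv
      rw [Set.mem_Icc] at ht
      refine ⟨(q (t - 1), q t), ?_, rfl⟩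
      rw [List.mem_map]
      refine ⟨t - 1, List.mem_range.2 (by omega), ?_⟩
      have h1 : t - 1 + 1 = t := by omega
      rw [h1]
    · exact Or.inl hv
  · refine ⟨y, ⟨hyW, ⟨q 1, ?_⟩⟩, ?_⟩
    · rw [List.mem_map]
      exact ⟨0, List.mem_range.2 (by omega), by rw [hq0]⟩
    · rintro b ⟨hbB, w, hbw⟩
      rw [List.mem_map] at hbw
      obtain ⟨j, hj, hjw⟩ := hbw
      rw [List.mem_range] at hj
      have hbq : q j = b := congrArg Prod.fst hjw
      rcases Nat.eq_zero_or_pos j with rfl | hj1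
      · rw [← hbq, hq0]
      · exact absurd (⟨j, Set.mem_Icc.2 ⟨hj1, by omega⟩, hbq⟩ : b ∈ W) hbB

section K3
variable {V : Type*} [Fintype V] {G : SimpleGraph V} {C : ZMod 3 → Set V}

lemma construct3_star
    (hcl : ∀ i, G.IsClique (C i))
    (hcover : ∀ u v, G.Adj u v → ∃ i, u ∈ C i ∧ v ∈ C i)
    (x y : V) (hx : x ∈ C 1) (hx' : ∀ i, i ≠ 1 → x ∉ C i)
    (hy : y ∈ C 0) (hy' : ∀ i, i ≠ 0 → y ∉ C i)
    (d r : V) (hd0 : d ∈ C 0) (hd1 : d ∈ C 1) (hd2 : d ∈ C 2)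
    (hr2 : r ∈ C 2) (hr0 : r ∉ C 0) (hr1 : r ∉ C 1) :
    ∃ (B : Set V) (L : List (V × V)), B.ncard = Fintype.card V - 3 ∧
      PSDValid G B L ∧ applyForces B L = Set.univ ∧
      (∃! b, b ∈ B ∧ ∃ w, (b, w) ∈ L) := by
  classical
  have hall : ∀ m : ZMod 3, m = 0 ∨ m = 1 ∨ m = 2 := by decide
  have hyC : ∀ m, y ∈ C m → m = 0 := fun m hm => by by_contra hne; exact hy' m hne hm
  have hx0 : x ∉ C 0 := hx' 0 (by decide)
  have hx2 : x ∉ C 2 := hx' 2 (by decide)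
  have hy1 : y ∉ C 1 := hy' 1 (by decide)
  have hy2 : y ∉ C 2 := hy' 2 (by decide)
  have hxy : x ≠ y := fun h => hx0 (by rw [h]; exact hy)
  have hxd : x ≠ d := fun h => hx0 (by rw [h]; exact hd0)
  have hyd : y ≠ d := fun h => hy1 (by rw [h]; exact hd1)
  have hrx : r ≠ x := fun h => hx2 (by rw [← h]; exact hr2)
  have hry : r ≠ y := fun h => hy2 (by rw [← h]; exact hr2)
  have hrd : r ≠ d := fun h => hr0 (by rw [h]; exact hd0)
  set W : Set V := {x, y, d} with hW
  have hWx : x ∈ W := Or.inl rfl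
  have hWy : y ∈ W := Or.inr (Or.inl rfl)
  have hWd : d ∈ W := Or.inr (Or.inr rfl)
  have hrW : r ∉ W := by
    rintro (h | h | h)
    exacts [hrx h, hry h, hrd h]
  have hWcard : W.ncard = 3 := by
    rw [hW, Set.ncard_insert_of_notMem (by rintro (h | h); exacts [hxy h, hxd h]),
      Set.ncard_pair hyd]
  have hBcard : Wᶜ.ncard = Fintype.card V - 3 := by
    have := Set.ncard_add_ncard_compl W
    rw [Nat.card_eq_fintype_card] at this
    omega
  refine ⟨Wᶜ, [(r, d), (d, x), (d, y)], hBcard, ⟨?_, ?_, ?_, trivial⟩, ?_, ?_⟩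
  · -- force r → d
    refine ⟨hrW, by simp [hW], hcl 2 hr2 hd2 hrd, ?_⟩
    intro v hadj hvS _
    have hv : v ∈ W := not_not.1 hvS
    obtain ⟨m, hm1, hm2⟩ := hcover r v hadj
    rcases hall m with rfl | rfl | rfl
    · exact absurd hm1 hr0
    · exact absurd hm1 hr1
    · rcases hv with rfl | rfl | rfl
      · exact absurd hm2 hx2
      · exact absurd hm2 hy2
      · rfl
  · -- force d → x
    refine ⟨Set.mem_insert _ _, ?_, hcl 1 hd1 hx hxd.symm, ?_⟩
    · rintro (h | h)
      · exact hxd h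
      · exact h hWx
    · intro v hadj hvS hconn
      have hvd : v ≠ d := fun h => hvS (h ▸ Set.mem_insert _ _)
      have hv : v ∈ W := not_not.1 (fun h => hvS (Set.mem_insert_of_mem _ h))
      rcases hv with rfl | hveq | rfl
      · rfl
      · exfalso
        rw [hveq] at hconn
        rcases Relation.ReflTransGen.cases_head hconn with heq | ⟨c, hstep, _⟩
        · exact hxy heq.symm
        · obtain ⟨hy1', hc1, hadj'⟩ := hstep
          have hcd : c ≠ d := fun h => hc1 (h ▸ Set.mem_insert _ _)
          have hcW : c ∈ W := not_not.1 (fun h => hc1 (Set.mem_insert_of_mem _ h))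
          obtain ⟨m, hm1, hm2⟩ := hcover y c hadj'
          have := hyC m hm1
          subst this
          rcases hcW with rfl | rfl | rfl
          · exact hx0 hm2
          · exact G.ne_of_adj hadj' rfl
          · exact hcd rfl
      · exact absurd rfl hvd
  · -- force d → y
    refine ⟨Set.mem_insert_of_mem _ (Set.mem_insert _ _), ?_, hcl 0 hd0 hy hyd.symm, ?_⟩
    · rintro (h | h | h)
      · exact hxy h.symm
      · exact hyd h
      · exact h hWy
    · intro v hadj hvS _
      have hvx : v ≠ x := fun h => hvS (h ▸ Set.mem_insert _ _)
      have hvd : v ≠ d := fun h =>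
        hvS (h ▸ Set.mem_insert_of_mem _ (Set.mem_insert _ _))
      have hv : v ∈ W := not_not.1
        (fun h => hvS (Set.mem_insert_of_mem _ (Set.mem_insert_of_mem _ h)))
      rcases hv with rfl | rfl | rfl
      · exact absurd rfl hvx
      · rfl
      · exact absurd rfl hvd
  · -- applyForces
    rw [applyForces_eq]
    ext v
    simp only [Set.mem_union, Set.mem_setOf_eq, Set.mem_univ, iff_true]
    by_cases hv : v ∈ W
    · right
      rcases hv with rfl | rfl | rfl
      · exact ⟨(d, v), by simp, rfl⟩
      · exact ⟨(d, v), by simp, rfl⟩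
      · exact ⟨(r, v), by simp, rfl⟩
    · exact Or.inl hv
  · -- unique source
    refine ⟨r, ⟨hrW, d, by simp⟩, ?_⟩
    rintro b ⟨hbB, w, hbw⟩
    simp only [List.mem_cons, List.not_mem_nil, or_false, Prod.mk.injEq] at hbw
    rcases hbw with ⟨rfl, rfl⟩ | ⟨rfl, rfl⟩ | ⟨rfl, rfl⟩
    · rfl
    · exact absurd hWd hbB
    · exact absurd hWd hbB

lemma construct3_path
    (hcl : ∀ i, G.IsClique (C i))
    (hcover : ∀ u v, G.Adj u v → ∃ i, u ∈ C i ∧ v ∈ C i)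
    (x y : V) (hx : x ∈ C 1) (hx' : ∀ i, i ≠ 1 → x ∉ C i)
    (hy : y ∈ C 0) (hy' : ∀ i, i ≠ 0 → y ∉ C i)
    (d2 d3 : V) (hd21 : d2 ∈ C 1) (hd22 : d2 ∈ C 2) (hd20 : d2 ∉ C 0)
    (hd32 : d3 ∈ C 2) (hd30 : d3 ∈ C 0) (hd31 : d3 ∉ C 1) :
    ∃ (B : Set V) (L : List (V × V)), B.ncard = Fintype.card V - 3 ∧
      PSDValid G B L ∧ applyForces B L = Set.univ ∧
      (∃! b, b ∈ B ∧ ∃ w, (b, w) ∈ L) := by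
  classical
  have hall : ∀ m : ZMod 3, m = 0 ∨ m = 1 ∨ m = 2 := by decide
  have hyC : ∀ m, y ∈ C m → m = 0 := fun m hm => by by_contra hne; exact hy' m hne hm
  have hx0 : x ∉ C 0 := hx' 0 (by decide)
  have hx2 : x ∉ C 2 := hx' 2 (by decide)
  have hy1 : y ∉ C 1 := hy' 1 (by decide)
  have hy2 : y ∉ C 2 := hy' 2 (by decide)
  have hxy : x ≠ y := fun h => hx0 (by rw [h]; exact hy)
  have hxd2 : x ≠ d2 := fun h => hx2 (by rw [h]; exact hd22)
  have hxd3 : x ≠ d3 := fun h => hx2 (by rw [h]; exact hd32)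
  have hyd2 : y ≠ d2 := fun h => hy1 (by rw [h]; exact hd21)
  have hyd3 : y ≠ d3 := fun h => hy2 (by rw [h]; exact hd32)
  have hd23 : d2 ≠ d3 := fun h => hd20 (by rw [h]; exact hd30)
  set W : Set V := {x, d2, d3} with hW
  have hWx : x ∈ W := Or.inl rfl
  have hWd2 : d2 ∈ W := Or.inr (Or.inl rfl)
  have hWd3 : d3 ∈ W := Or.inr (Or.inr rfl)
  have hyW : y ∉ W := by
    rintro (h | h | h)
    exacts [hxy h.symm, hyd2 h, hyd3 h]
  have hWcard : W.ncard = 3 := by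
    rw [hW, Set.ncard_insert_of_notMem (by rintro (h | h); exacts [hxd2 h, hxd3 h]),
      Set.ncard_pair hd23]
  have hBcard : Wᶜ.ncard = Fintype.card V - 3 := by
    have := Set.ncard_add_ncard_compl W
    rw [Nat.card_eq_fintype_card] at this
    omega
  refine ⟨Wᶜ, [(y, d3), (d3, d2), (d2, x)], hBcard, ⟨?_, ?_, ?_, trivial⟩, ?_, ?_⟩
  · -- force y → d3
    refine ⟨hyW, by simp [hW], hcl 0 hy hd30 hyd3, ?_⟩
    intro v hadj hvS _
    have hv : v ∈ W := not_not.1 hvS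
    obtain ⟨m, hm1, hm2⟩ := hcover y v hadj
    have := hyC m hm1
    subst this
    rcases hv with rfl | rfl | rfl
    · exact absurd hm2 hx0
    · exact absurd hm2 hd20
    · rfl
  · -- force d3 → d2
    refine ⟨Set.mem_insert _ _, ?_, hcl 2 hd32 hd22 hd23.symm, ?_⟩
    · rintro (h | h)
      · exact hd23 h
      · exact h hWd2
    · intro v hadj hvS _
      have hvd3 : v ≠ d3 := fun h => hvS (h ▸ Set.mem_insert _ _)
      have hv : v ∈ W := not_not.1 (fun h => hvS (Set.mem_insert_of_mem _ h))
      obtain ⟨m, hm1, hm2⟩ := hcover d3 v hadj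
      rcases hall m with rfl | rfl | rfl
      · rcases hv with rfl | rfl | rfl
        · exact absurd hm2 hx0
        · exact absurd hm2 hd20
        · exact absurd rfl hvd3
      · exact absurd hm1 hd31
      · rcases hv with rfl | rfl | rfl
        · exact absurd hm2 hx2
        · rfl
        · exact absurd rfl hvd3
  · -- force d2 → x
    refine ⟨Set.mem_insert _ _, ?_, hcl 1 hd21 hx (Ne.symm hxd2), ?_⟩
    · rintro (h | h | h)
      · exact hxd2 h
      · exact hxd3 h
      · exact h hWx
    · intro v hadj hvS _
      have hvd2 : v ≠ d2 := fun h => hvS (h ▸ Set.mem_insert _ _)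
      have hvd3 : v ≠ d3 := fun h =>
        hvS (h ▸ Set.mem_insert_of_mem _ (Set.mem_insert _ _))
      have hv : v ∈ W := not_not.1
        (fun h => hvS (Set.mem_insert_of_mem _ (Set.mem_insert_of_mem _ h)))
      rcases hv with rfl | rfl | rfl
      · rfl
      · exact absurd rfl hvd2
      · exact absurd rfl hvd3
  · rw [applyForces_eq]
    ext v
    simp only [Set.mem_union, Set.mem_setOf_eq, Set.mem_univ, iff_true]
    by_cases hv : v ∈ W
    · right
      rcases hv with rfl | rfl | rfl
      · exact ⟨(d2, v), by simp, rfl⟩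
      · exact ⟨(d3, v), by simp, rfl⟩
      · exact ⟨(y, v), by simp, rfl⟩
    · exact Or.inl hv
  · refine ⟨y, ⟨hyW, d3, by simp⟩, ?_⟩
    rintro b ⟨hbB, w, hbw⟩
    simp only [List.mem_cons, List.not_mem_nil, or_false, Prod.mk.injEq] at hbw
    rcases hbw with ⟨rfl, rfl⟩ | ⟨rfl, rfl⟩ | ⟨rfl, rfl⟩
    · rfl
    · exact absurd hWd3 hbB
    · exact absurd hWd2 hbB

lemma construct3
    (hinj : Function.Injective C)
    (hcl : ∀ i, G.IsClique (C i))
    (hmax : ∀ i, ∀ D : Set V, G.IsClique D → C i ⊆ D → C i = D)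
    (hcover : ∀ u v, G.Adj u v → ∃ i, u ∈ C i ∧ v ∈ C i)
    (hcons : ∀ i j : ZMod 3, i ≠ j → ((C i ∩ C j).Nonempty ↔ (j = i + 1 ∨ i = j + 1)))
    (x y : V) (hx : x ∈ C 1) (hx' : ∀ i, i ≠ 1 → x ∉ C i)
    (hy : y ∈ C 0) (hy' : ∀ i, i ≠ 0 → y ∉ C i) :
    ∃ (B : Set V) (L : List (V × V)), B.ncard = Fintype.card V - 3 ∧
      PSDValid G B L ∧ applyForces B L = Set.univ ∧
      (∃! b, b ∈ B ∧ ∃ w, (b, w) ∈ L) := by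
  classical
  have h12 : ((C 1 ∩ C 2) : Set V).Nonempty :=
    (hcons 1 2 (by decide)).2 (Or.inl (by decide))
  have h20 : ((C 2 ∩ C 0) : Set V).Nonempty :=
    (hcons 2 0 (by decide)).2 (Or.inl (by decide))
  by_cases hA : ∃ d2, d2 ∈ C 1 ∧ d2 ∈ C 2 ∧ d2 ∉ C 0
  · by_cases hB : ∃ d3, d3 ∈ C 2 ∧ d3 ∈ C 0 ∧ d3 ∉ C 1
    · obtain ⟨d2, h1, h2, h0⟩ := hA
      obtain ⟨d3, h2', h0', h1'⟩ := hB
      exact construct3_path hcl hcover x y hx hx' hy hy' d2 d3 h1 h2 h0 h2' h0' h1'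
    · -- every vertex of C 2 ∩ C 0 lies in C 1
      push_neg at hB
      obtain ⟨d, hd2, hd0⟩ := h20
      have hd1 : d ∈ C 1 := hB d hd2 hd0
      -- find r ∈ C 2 \ C 1
      have hr : ∃ r, r ∈ C 2 ∧ r ∉ C 1 := by
        by_contra hc
        push_neg at hc
        have : C 2 = C 1 := hmax 2 (C 1) (hcl 1) hc
        exact (by decide : (2 : ZMod 3) ≠ 1) (hinj this)
      obtain ⟨r, hr2, hr1⟩ := hr
      have hr0 : r ∉ C 0 := fun h => hr1 (hB r hr2 h)
      exact construct3_star hcl hcover x y hx hx' hy hy' d r hd0 hd1 hd2 hr2 hr0 hr1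
  · push_neg at hA
    obtain ⟨d, hd1, hd2⟩ := h12
    have hd0 : d ∈ C 0 := hA d hd1 hd2
    have hr : ∃ r, r ∈ C 2 ∧ r ∉ C 0 := by
      by_contra hc
      push_neg at hc
      have : C 2 = C 0 := hmax 2 (C 0) (hcl 0) hc
      exact (by decide : (2 : ZMod 3) ≠ 0) (hinj this)
    obtain ⟨r, hr2, hr0⟩ := hr
    have hr1 : r ∉ C 1 := fun h => hr0 (hA r h hr2)
    exact construct3_star hcl hcover x y hx hx' hy hy' d r hd0 hd1 hd2 hr2 hr0 hr1

end K3

/-- Let `G` be a cycle of cliques `C 1, …, C k` (`k ≥ 3`) with a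
vertex `x ∈ C 1` in no other clique and a vertex `y ∈ C 0` (the clique `C k`) in no
other clique. Then `Z₊(G) = |V(G)| − k` and there is an optimal positive zero forcing
set of that size admitting a positive zero forcing process with exactly one non-trivial
forcing tree. -/

theorem cycleOfCliques_psd_one_tree {V : Type*} [Fintype V] (G : SimpleGraph V)
    (k : ℕ) (hk : 3 ≤ k) (C : ZMod k → Set V) (hC : IsCycleOfCliques G k C)
    (x y : V) (hx : x ∈ C 1) (hx' : ∀ i : ZMod k, i ≠ 1 → x ∉ C i)
    (hy : y ∈ C 0) (hy' : ∀ i : ZMod k, i ≠ 0 → y ∉ C i) :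
    psdNum G = Fintype.card V - k ∧
      ∃ (B : Set V) (L : List (V × V)), B.ncard = Fintype.card V - k ∧
        PSDValid G B L ∧ applyForces B L = Set.univ ∧
        (∃! b, b ∈ B ∧ ∃ w, (b, w) ∈ L) := by
  obtain ⟨hinj, hmaxcl, hcover, hcons⟩ := hC
  have hcl : ∀ i, G.IsClique (C i) := fun i => (hmaxcl i).1
  have hmax : ∀ i, ∀ D : Set V, G.IsClique D → C i ⊆ D → C i = D := fun i => (hmaxcl i).2
  have hcon : ∃ (B : Set V) (L : List (V × V)), B.ncard = Fintype.card V - k ∧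
      PSDValid G B L ∧ applyForces B L = Set.univ ∧
      (∃! b, b ∈ B ∧ ∃ w, (b, w) ∈ L) := by
    rcases eq_or_lt_of_le hk with h3 | h4
    · have hk3 : k = 3 := h3.symm
      subst hk3
      exact construct3 hinj hcl hmax hcover hcons x y hx hx' hy hy'
    · exact construct_ge4 (by omega) hcl hcover hcons x y hx hx' hy hy'
  obtain ⟨B, L, hBc, hval, happ, huniq⟩ := hcon
  have hpsd : psdNum G = sInf {n | ∃ B : Set V, B.ncard = n ∧ IsPSDForcingSet G B} := rfl
  constructor
  · rw [hpsd]
    apply le_antisymm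
    · exact Nat.sInf_le ⟨B, hBc, L, hval, happ⟩
    · have hne : {n | ∃ B : Set V, B.ncard = n ∧ IsPSDForcingSet G B}.Nonempty :=
        ⟨B.ncard, B, rfl, L, hval, happ⟩
      apply le_csInf hne
      rintro m ⟨B', hc, L', hv', ha'⟩
      have hlow := psd_lower (k := k) (by omega) hcl hcover hv' ha'
      omega
  · exact ⟨B, L, hBc, hval, happ, huniq⟩
end
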